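/- arXiv:0902.4344 — 7 statements merged into one kernel-verified Lean document; each statement's English description precedes it below -/
import Mathlib

section
/- Let n, p ≥ 1, let X be a real n×p matrix, let A be a symmetric positive definite real p×p matrix, let ρ > 0, let α ∈ ℝ^p and d ∈ ℝ^n, and set M := (1/(n·p))·Xᵀ·X + ρ·A and â := (1/n)·M⁻¹·Xᵀ·((1/p)·X·α + d). Then (1/(n·p²))·‖X·(â − α)‖² ≤ 2·(ρ/p)·αᵀ·A·α + (4/n)·‖d‖², where ‖·‖ is the Euclidean norm. -/
open Matrix

/-- Deterministic bias bound (Theorem 1, relation (3.1)) for the smoothing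
splines estimator: with `M = (1/(np)) XᵀX + ρ A` and
`â = (1/n) M⁻¹ Xᵀ ((1/p) X α + d)`, one has
`(1/(np²)) ‖X(â − α)‖² ≤ 2 (ρ/p) αᵀAα + (4/n) ‖d‖²`. -/
theorem stmt0 {n p : ℕ} (hn : 1 ≤ n) (hp : 1 ≤ p)
    (X : Matrix (Fin n) (Fin p) ℝ) (A : Matrix (Fin p) (Fin p) ℝ)
    (hA : A.PosDef) (hAsymm : A.IsSymm) (ρ : ℝ) (hρ : 0 < ρ)
    (α : Fin p → ℝ) (d : Fin n → ℝ)
    (M : Matrix (Fin p) (Fin p) ℝ)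
    (hM : M = (1 / ((n : ℝ) * (p : ℝ))) • (Xᵀ * X) + ρ • A)
    (ahat : Fin p → ℝ)
    (hahat : ahat = (1 / (n : ℝ)) •
      M⁻¹.mulVec (Xᵀ.mulVec ((1 / (p : ℝ)) • X.mulVec α + d))) :
    (1 / ((n : ℝ) * (p : ℝ) ^ 2)) * (X.mulVec (ahat - α) ⬝ᵥ X.mulVec (ahat - α)) ≤
      2 * (ρ / (p : ℝ)) * (α ⬝ᵥ A.mulVec α) + (4 / (n : ℝ)) * (d ⬝ᵥ d) := by
  have hN : (0:ℝ) < (n:ℝ) := by exact_mod_cast Nat.lt_of_lt_of_le Nat.zero_lt_one hn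
  have hP : (0:ℝ) < (p:ℝ) := by exact_mod_cast Nat.lt_of_lt_of_le Nat.zero_lt_one hp
  set u : Fin p → ℝ := ahat - α with hu
  have hdotT : ∀ (v : Fin p → ℝ) (w : Fin n → ℝ),
      v ⬝ᵥ Xᵀ *ᵥ w = (X *ᵥ v) ⬝ᵥ w := fun v w => by
    rw [dotProduct_mulVec, vecMul_transpose]
  have hquad : ∀ v : Fin p → ℝ, v ⬝ᵥ (Xᵀ * X) *ᵥ v = (X *ᵥ v) ⬝ᵥ (X *ᵥ v) := fun v => by
    rw [← mulVec_mulVec, hdotT]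
  have hself : ∀ {m : ℕ} (v : Fin m → ℝ), 0 ≤ v ⬝ᵥ v := fun v =>
    Finset.sum_nonneg fun i _ => mul_self_nonneg _
  have hApsd := hA.posSemidef
  have hAq : ∀ v : Fin p → ℝ, 0 ≤ v ⬝ᵥ A *ᵥ v := fun v => by
    simpa using hApsd.dotProduct_mulVec_nonneg v
  -- M is positive definite
  have hMpd : M.PosDef := by
    refine posDef_iff_dotProduct_mulVec.mpr ⟨?_, ?_⟩
    · show Mᴴ = M
      rw [hM]
      rw [conjTranspose_eq_transpose_of_trivial, transpose_add, transpose_smul,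
        transpose_smul, transpose_mul, transpose_transpose, hAsymm]
    · intro x hx
      have h2 := hA.dotProduct_mulVec_pos hx
      simp only [star_trivial] at h2 ⊢
      rw [hM, add_mulVec, smul_mulVec, smul_mulVec, dotProduct_add,
        dotProduct_smul, dotProduct_smul, hquad, smul_eq_mul, smul_eq_mul]
      have h3 := hself (X *ᵥ x)
      have h4 : (0:ℝ) ≤ 1 / ((n:ℝ) * (p:ℝ)) := by positivity
      nlinarith [mul_nonneg h4 h3, mul_pos hρ h2]
  have hdet : IsUnit M.det := isUnit_iff_ne_zero.mpr hMpd.det_pos.ne'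
  have hMinv : M * M⁻¹ = 1 := mul_nonsing_inv M hdet
  -- normal equation
  have h1 : M *ᵥ ahat = (1/(n:ℝ)) • (Xᵀ *ᵥ ((1/(p:ℝ)) • (X *ᵥ α) + d)) := by
    rw [hahat, mulVec_smul, mulVec_mulVec, hMinv, one_mulVec]
  have h2 : M *ᵥ α = (1/((n:ℝ)*(p:ℝ))) • (Xᵀ *ᵥ (X *ᵥ α)) + ρ • (A *ᵥ α) := by
    rw [hM, add_mulVec, smul_mulVec, smul_mulVec, ← mulVec_mulVec]
  have hMu : M *ᵥ u = (1/(n:ℝ)) • (Xᵀ *ᵥ d) - ρ • (A *ᵥ α) := by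
    rw [hu, mulVec_sub, h1, h2, mulVec_add, mulVec_smul]
    ext i
    simp only [Pi.sub_apply, Pi.add_apply, Pi.smul_apply, smul_eq_mul]
    field_simp
    ring
  -- two evaluations of the quadratic form
  have E1 : u ⬝ᵥ M *ᵥ u = (1/((n:ℝ)*(p:ℝ))) * ((X *ᵥ u) ⬝ᵥ (X *ᵥ u))
      + ρ * (u ⬝ᵥ A *ᵥ u) := by
    rw [hM, add_mulVec, smul_mulVec, smul_mulVec, dotProduct_add,
      dotProduct_smul, dotProduct_smul, hquad, smul_eq_mul, smul_eq_mul]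
  have E2 : u ⬝ᵥ M *ᵥ u = (1/(n:ℝ)) * ((X *ᵥ u) ⬝ᵥ d) - ρ * (u ⬝ᵥ A *ᵥ α) := by
    rw [hMu, dotProduct_sub, dotProduct_smul, dotProduct_smul, hdotT, smul_eq_mul, smul_eq_mul]
  have E := E1.symm.trans E2
  -- symmetry
  have hvm : α ᵥ* A = A *ᵥ α := by rw [← vecMul_transpose, hAsymm]
  have hsym : α ⬝ᵥ A *ᵥ u = u ⬝ᵥ A *ᵥ α := by
    rw [dotProduct_mulVec, hvm, dotProduct_comm]
  -- quadratic inequalities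
  have hexp : (u + α) ⬝ᵥ A *ᵥ (u + α)
      = u ⬝ᵥ A *ᵥ u + 2*(u ⬝ᵥ A *ᵥ α) + α ⬝ᵥ A *ᵥ α := by
    rw [mulVec_add, dotProduct_add, add_dotProduct, add_dotProduct, hsym]; ring
  have hq3 : 0 ≤ u ⬝ᵥ A *ᵥ u + 2*(u ⬝ᵥ A *ᵥ α) + α ⬝ᵥ A *ᵥ α := hexp ▸ hAq (u + α)
  have hx2 : ((X *ᵥ u) - (2*(p:ℝ)) • d) ⬝ᵥ ((X *ᵥ u) - (2*(p:ℝ)) • d)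
      = (X *ᵥ u) ⬝ᵥ (X *ᵥ u) - 4*(p:ℝ)*((X *ᵥ u) ⬝ᵥ d) + 4*(p:ℝ)^2*(d ⬝ᵥ d) := by
    simp only [sub_dotProduct, dotProduct_sub, smul_dotProduct, dotProduct_smul, smul_eq_mul]
    rw [dotProduct_comm d (X *ᵥ u)]
    ring
  have hsq : 0 ≤ (X *ᵥ u) ⬝ᵥ (X *ᵥ u) - 4*(p:ℝ)*((X *ᵥ u) ⬝ᵥ d) + 4*(p:ℝ)^2*(d ⬝ᵥ d) :=
    hx2 ▸ hself ((X *ᵥ u) - (2*(p:ℝ)) • d)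
  -- clear denominators in E
  have E' : (X *ᵥ u) ⬝ᵥ (X *ᵥ u) + (n:ℝ)*(p:ℝ)*ρ*(u ⬝ᵥ A *ᵥ u)
      = (p:ℝ)*((X *ᵥ u) ⬝ᵥ d) - (n:ℝ)*(p:ℝ)*ρ*(u ⬝ᵥ A *ᵥ α) := by
    field_simp at E
    apply mul_left_cancel₀ hN.ne'
    linear_combination (n:ℝ) * E
  have hNPρ : (0:ℝ) ≤ (n:ℝ)*(p:ℝ)*ρ := by positivity
  have key : (X *ᵥ u) ⬝ᵥ (X *ᵥ u)
      ≤ 2*ρ*(n:ℝ)*(p:ℝ)*(α ⬝ᵥ A *ᵥ α) + 4*(p:ℝ)^2*(d ⬝ᵥ d) := by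
    nlinarith [E', hsq, mul_nonneg hNPρ hq3, mul_nonneg hNPρ (hAq u),
      mul_nonneg hNPρ (hAq α), mul_nonneg (sq_nonneg (p:ℝ)) (hself d)]
  have hpos : (0:ℝ) < (n:ℝ)*(p:ℝ)^2 := by positivity
  have hfin := mul_le_mul_of_nonneg_left key (le_of_lt (one_div_pos.mpr hpos))
  have heq : (1/((n:ℝ)*(p:ℝ)^2)) * (2*ρ*(n:ℝ)*(p:ℝ)*(α ⬝ᵥ A *ᵥ α) + 4*(p:ℝ)^2*(d ⬝ᵥ d))
      = 2 * (ρ / (p:ℝ)) * (α ⬝ᵥ A *ᵥ α) + (4 / (n:ℝ)) * (d ⬝ᵥ d) := by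
    field_simp
  linarith [heq ▸ hfin]
end

section
/- Let (Ω, 𝒜, ℙ) be a probability space and let ε₁, …, ε_n : Ω → ℝ be independent, square-integrable random variables with E(ε_i) = 0 and Var(ε_i) = σ² for all i. Let X be a real n×p matrix, A a symmetric positive definite real p×p matrix, ρ > 0, and y₀ ∈ ℝ^n. Set M := (1/(n·p))·Xᵀ·X + ρ·A, ε̄(ω) := (1/n)·Σᵢ ε_i(ω), and define the random vector α̂(ω) := (1/n)·M⁻¹·Xᵀ·(y₀ + ε(ω) − ε̄(ω)·𝟙), where 𝟙 ∈ ℝ^n is the all-ones vector. Then E[ ‖α̂ − E(α̂)‖²_{Γ_{n,p}} ] ≤ (σ²/n)·Tr[ M⁻¹ · (1/(n·p))·Xᵀ·X ], where ‖u‖²_{Γ_{n,p}} := (1/(n·p²))·‖X·u‖² for u ∈ ℝ^p. -/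
open Matrix MeasureTheory ProbabilityTheory

lemma myPsdTraceNonneg {m : Type*} [Fintype m] [DecidableEq m] {Q : Matrix m m ℝ}
    (hQ : Q.PosSemidef) : 0 ≤ Q.trace := by
  rw [Matrix.trace]
  refine Finset.sum_nonneg fun i _ => ?_
  have h := hQ.dotProduct_mulVec_nonneg (Pi.single i 1)
  simpa [dotProduct, Matrix.mulVec, Pi.single_apply, Finset.sum_ite_eq,
    Finset.sum_ite_eq'] using h

lemma myTraceMulPsdNonneg {m : Type*} [Fintype m] [DecidableEq m] {P Q : Matrix m m ℝ}
    (hP : P.PosSemidef) (hQ : Q.PosSemidef) : 0 ≤ (P * Q).trace := by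
  obtain ⟨B, hB⟩ : ∃ B : Matrix m m ℝ, Q = star B * B := by
    open scoped MatrixOrder in exact CStarAlgebra.nonneg_iff_eq_star_mul_self.mp hQ.nonneg
  rw [Matrix.star_eq_conjTranspose] at hB
  rw [hB, ← Matrix.mul_assoc, Matrix.trace_mul_comm]
  have : (B * (P * Bᴴ)).PosSemidef := by
    have := hP.mul_mul_conjTranspose_same B
    rwa [Matrix.mul_assoc] at this
  exact myPsdTraceNonneg this

lemma myPsdSmul {m : Type*} [Fintype m] {Q : Matrix m m ℝ} (hQ : Q.PosSemidef)
    {c : ℝ} (hc : 0 ≤ c) : (c • Q).PosSemidef := by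
  refine Matrix.posSemidef_iff_dotProduct_mulVec.mpr ⟨?_, fun x => ?_⟩
  · unfold Matrix.IsHermitian
    rw [Matrix.conjTranspose_smul, hQ.1.eq]
    simp
  · rw [Matrix.smul_mulVec, dotProduct_smul, smul_eq_mul]
    exact mul_nonneg hc (hQ.dotProduct_mulVec_nonneg x)

lemma myPosDefSmul {m : Type*} [Fintype m] {Q : Matrix m m ℝ} (hQ : Q.PosDef)
    {c : ℝ} (hc : 0 < c) : (c • Q).PosDef := by
  refine Matrix.posDef_iff_dotProduct_mulVec.mpr ⟨?_, fun x hx => ?_⟩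
  · unfold Matrix.IsHermitian
    rw [Matrix.conjTranspose_smul, hQ.1.eq]
    simp
  · rw [Matrix.smul_mulVec, dotProduct_smul, smul_eq_mul]
    exact mul_pos hc (hQ.dotProduct_mulVec_pos hx)

lemma myMulIntegrable {Ω : Type*} [MeasurableSpace Ω] {P : Measure Ω} {f g : Ω → ℝ}
    (hf : MemLp f 2 P) (hg : MemLp g 2 P) : Integrable (fun ω => f ω * g ω) P := by
  have h : MemLp (g • f) 1 P := hf.smul (φ := g) hg
  rw [memLp_one_iff_integrable] at h
  have : (g • f) = fun ω => f ω * g ω := funext fun ω => mul_comm _ _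
  rwa [this] at h

lemma mySumT {n : ℕ} (hn : (0:ℝ) < n) (i j : Fin n) :
    ∑ k : Fin n, (((if i = k then (1:ℝ) else 0) - 1/n) * ((if j = k then (1:ℝ) else 0) - 1/n))
      = (if i = j then (1:ℝ) else 0) - 1/n := by
  have hexp : ∀ k : Fin n,
      ((if i = k then (1:ℝ) else 0) - 1/n) * ((if j = k then (1:ℝ) else 0) - 1/n)
      = (if i = k then (if j = k then (1:ℝ) else 0) else 0)
        - (1/n) * (if i = k then (1:ℝ) else 0)
        - (1/n) * (if j = k then (1:ℝ) else 0) + (1/n) * (1/n) := by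
    intro k
    by_cases h1 : i = k <;> by_cases h2 : j = k <;> simp [h1, h2] <;> ring
  rw [Finset.sum_congr rfl fun k _ => hexp k]
  have hne : (n:ℝ) ≠ 0 := ne_of_gt hn
  simp only [Finset.sum_add_distrib, Finset.sum_sub_distrib, ← Finset.mul_sum,
    Finset.sum_ite_eq, Finset.mem_univ, if_true, Finset.sum_const, Finset.card_univ,
    Fintype.card_fin, nsmul_eq_mul]
  have : (if i = j then (1:ℝ) else 0) = (if j = i then (1:ℝ) else 0) := by
    by_cases h : i = j <;> simp [h, eq_comm]
  rw [this]
  field_simp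
  ring


/-- Variance bound, first step of relation (3.2) in Theorem 1: for the
penalized estimator computed from `y₀` plus centered i.i.d.-type noise,
`E ‖α̂ − E(α̂)‖²_{Γ_{n,p}} ≤ (σ²/n)·Tr[M⁻¹ · (1/(np)) XᵀX]`. -/
theorem stmt1 {n p : ℕ} (hn : 1 ≤ n) (hp : 1 ≤ p)
    {Ω : Type*} [MeasurableSpace Ω] (P : Measure Ω) [IsProbabilityMeasure P]
    (ε : Fin n → Ω → ℝ)
    (hindep : iIndepFun ε P)
    (hL2 : ∀ i, MemLp (ε i) 2 P)
    (hmean : ∀ i, ∫ ω, ε i ω ∂P = 0)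
    (σ : ℝ) (hvar : ∀ i, variance (ε i) P = σ ^ 2)
    (X : Matrix (Fin n) (Fin p) ℝ) (A : Matrix (Fin p) (Fin p) ℝ)
    (hA : A.PosDef) (hAsymm : A.IsSymm)
    (ρ : ℝ) (hρ : 0 < ρ) (y₀ : Fin n → ℝ)
    (M : Matrix (Fin p) (Fin p) ℝ)
    (hM : M = (1 / ((n : ℝ) * (p : ℝ))) • (Xᵀ * X) + ρ • A)
    (αhat : Ω → Fin p → ℝ)
    (hαhat : ∀ ω, αhat ω = (1 / (n : ℝ)) •
      M⁻¹.mulVec (Xᵀ.mulVec (y₀ + fun i => ε i ω - (1 / (n : ℝ)) * ∑ i', ε i' ω)))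
    (Eαhat : Fin p → ℝ) (hE : ∀ j, Eαhat j = ∫ ω, αhat ω j ∂P) :
    ∫ ω, (1 / ((n : ℝ) * (p : ℝ) ^ 2)) *
        (X.mulVec (αhat ω - Eαhat) ⬝ᵥ X.mulVec (αhat ω - Eαhat)) ∂P ≤
      (σ ^ 2 / (n : ℝ)) * (M⁻¹ * ((1 / ((n : ℝ) * (p : ℝ))) • (Xᵀ * X))).trace := by
  classical
  have hn0 : (0:ℝ) < n := by exact_mod_cast hn
  have hp0 : (0:ℝ) < p := by exact_mod_cast hp
  have hnne : (n:ℝ) ≠ 0 := ne_of_gt hn0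
  have hpne : (p:ℝ) ≠ 0 := ne_of_gt hp0
  have hAe : Aᵀ = A := hAsymm
  set G := M⁻¹ with hG
  set K : Matrix (Fin p) (Fin p) ℝ := (1 / ((n : ℝ) * (p : ℝ))) • (Xᵀ * X) with hKdef
  -- matrix symmetry / positivity facts
  have hXtX : (Xᵀ * X).PosSemidef := by
    have h := Matrix.posSemidef_conjTranspose_mul_self X
    rwa [Matrix.conjTranspose_eq_transpose_of_trivial] at h
  have hKpsd : K.PosSemidef := myPsdSmul hXtX (by positivity)
  have hMpd : M.PosDef := by rw [hM]; exact Matrix.PosDef.posSemidef_add hKpsd (myPosDefSmul hA hρ)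
  have hdet : IsUnit M.det := isUnit_iff_ne_zero.mpr (ne_of_gt hMpd.det_pos)
  have hGM : G * M = 1 := by rw [hG]; exact Matrix.nonsing_inv_mul M hdet
  have hKsym : Kᵀ = K := by
    rw [hKdef]
    simp [Matrix.transpose_smul, Matrix.transpose_mul, Matrix.transpose_transpose]
  have hMsym : Mᵀ = M := by
    rw [hM]
    simp [Matrix.transpose_add, Matrix.transpose_smul, hKsym, hAe]
  have hGsym : Gᵀ = G := by rw [hG, Matrix.transpose_nonsing_inv, hMsym]
  -- noise vector and its properties
  set η : Fin n → Ω → ℝ := fun i ω => ε i ω - (1 / (n : ℝ)) * ∑ i', ε i' ω with hηdef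
  set D : Matrix (Fin p) (Fin n) ℝ := (1 / (n : ℝ)) • (G * Xᵀ) with hDdef
  set C : Matrix (Fin n) (Fin n) ℝ := X * D with hCdef
  have hεint : ∀ i, Integrable (ε i) P := fun i => (hL2 i).integrable one_le_two
  have hηL2 : ∀ i, MemLp (η i) 2 P := by
    intro i
    have hsum : MemLp (fun ω => ∑ i', ε i' ω) 2 P := memLp_finset_sum _ fun i' _ => hL2 i'
    exact (hL2 i).sub (hsum.const_mul _)
  have hηint : ∀ i, Integrable (η i) P := fun i => (hηL2 i).integrable one_le_two
  have hηzero : ∀ i, ∫ ω, η i ω ∂P = 0 := by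
    intro i
    have h1 : Integrable (fun ω => (1/(n:ℝ)) * ∑ i', ε i' ω) P :=
      (integrable_finset_sum _ fun i' _ => hεint i').const_mul _
    show ∫ ω, (ε i ω - (1 / (n : ℝ)) * ∑ i', ε i' ω) ∂P = 0
    rw [integral_sub (hεint i) h1, integral_const_mul,
      integral_finset_sum _ fun i' _ => hεint i']
    simp [hmean]
  -- second moments
  have hee : ∀ i j, ∫ ω, ε i ω * ε j ω ∂P = if i = j then σ^2 else 0 := by
    intro i j
    by_cases h : i = j
    · subst h
      rw [if_pos rfl]
      have h1 := variance_eq_sub (hL2 i)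
      rw [hvar i, hmean i] at h1
      have h3 : P[(ε i)^2] = ∫ ω, ε i ω * ε i ω ∂P := by
        simp [sq]
      rw [h3] at h1
      linarith
    · rw [if_neg h]
      have h2 := IndepFun.integral_mul_eq_mul_integral (hindep.indepFun h)
        (hεint i).aestronglyMeasurable (hεint j).aestronglyMeasurable
      have h3 : ∫ ω, ε i ω * ε j ω ∂P = P[ε i * ε j] := by simp [Pi.mul_apply]
      rw [h3, h2, hmean i, zero_mul]
  have hcov : ∀ i j, ∫ ω, η i ω * η j ω ∂P
      = σ^2 * ((if i = j then (1:ℝ) else 0) - 1/n) := by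
    intro i j
    have hrep : ∀ (i : Fin n) (ω : Ω),
        η i ω = ∑ k, ((if i = k then (1:ℝ) else 0) - 1/n) * ε k ω := by
      intro i ω
      show ε i ω - (1 / (n : ℝ)) * ∑ i', ε i' ω = _
      rw [Finset.sum_congr rfl fun k _ => sub_mul ((if i = k then (1:ℝ) else 0)) (1/(n:ℝ)) (ε k ω),
        Finset.sum_sub_distrib]
      simp [Finset.sum_ite_eq, Finset.mul_sum]
    have hηη : ∀ ω, η i ω * η j ω
        = ∑ k, ∑ l, (((if i = k then (1:ℝ) else 0) - 1/n) * ((if j = l then (1:ℝ) else 0) - 1/n))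
            * (ε k ω * ε l ω) := by
      intro ω
      rw [hrep i ω, hrep j ω, Finset.sum_mul_sum]
      exact Finset.sum_congr rfl fun k _ => Finset.sum_congr rfl fun l _ => by ring
    have hklint : ∀ (k l : Fin n), Integrable (fun ω =>
        (((if i = k then (1:ℝ) else 0) - 1/n) * ((if j = l then (1:ℝ) else 0) - 1/n))
          * (ε k ω * ε l ω)) P :=
      fun k l => (myMulIntegrable (hL2 k) (hL2 l)).const_mul _
    calc ∫ ω, η i ω * η j ω ∂P
        = ∑ k, ∑ l, (((if i = k then (1:ℝ) else 0) - 1/n) * ((if j = l then (1:ℝ) else 0) - 1/n))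
            * ∫ ω, ε k ω * ε l ω ∂P := by
          simp only [hηη]
          rw [integral_finset_sum _ fun k _ => integrable_finset_sum _ fun l _ => hklint k l]
          refine Finset.sum_congr rfl fun k _ => ?_
          rw [integral_finset_sum _ fun l _ => hklint k l]
          exact Finset.sum_congr rfl fun l _ => integral_const_mul _ _
      _ = ∑ k, (((if i = k then (1:ℝ) else 0) - 1/n) * ((if j = k then (1:ℝ) else 0) - 1/n)) * σ^2 := by
          refine Finset.sum_congr rfl fun k _ => ?_
          rw [Finset.sum_eq_single k]
          · rw [hee k k, if_pos rfl]
          · intro l _ hlk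
            rw [hee k l, if_neg (Ne.symm hlk), mul_zero]
          · intro hk; exact absurd (Finset.mem_univ k) hk
      _ = σ^2 * ((if i = j then (1:ℝ) else 0) - 1/n) := by
          rw [← Finset.sum_mul, mySumT hn0 i j, mul_comm]
  -- representation of the estimator
  have hαω : ∀ ω, αhat ω = D.mulVec y₀ + D.mulVec (fun i => η i ω) := by
    intro ω
    rw [hαhat ω]
    have e1 : (fun i => ε i ω - (1 / (n : ℝ)) * ∑ i', ε i' ω) = fun i => η i ω := rfl
    rw [e1, Matrix.mulVec_mulVec, ← Matrix.smul_mulVec, ← hDdef, Matrix.mulVec_add]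
  have hEeq : Eαhat = D.mulVec y₀ := by
    funext j
    rw [hE j]
    have e2 : (fun ω => αhat ω j) = fun ω => (D.mulVec y₀) j + ∑ i, D j i * η i ω := by
      funext ω
      rw [hαω ω]
      simp [Matrix.mulVec, dotProduct]
    rw [e2, integral_add (integrable_const _)
        (integrable_finset_sum _ fun i _ => (hηint i).const_mul _),
      integral_const, integral_finset_sum _ fun i _ => (hηint i).const_mul _]
    simp [integral_const_mul, hηzero]
  have hdiffvec : ∀ ω, αhat ω - Eαhat = D.mulVec (fun i => η i ω) := by
    intro ω; rw [hαω ω, hEeq, add_sub_cancel_left]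
  have hXveq : ∀ ω, X.mulVec (αhat ω - Eαhat) ⬝ᵥ X.mulVec (αhat ω - Eαhat)
      = ∑ k, ∑ i, ∑ j, (C k i * C k j) * (η i ω * η j ω) := by
    intro ω
    rw [hdiffvec ω, Matrix.mulVec_mulVec, ← hCdef, dotProduct]
    refine Finset.sum_congr rfl fun k _ => ?_
    rw [show (C *ᵥ fun i => η i ω) k = ∑ i, C k i * η i ω from by
      simp [Matrix.mulVec, dotProduct]]
    rw [Finset.sum_mul_sum]
    exact Finset.sum_congr rfl fun i _ => Finset.sum_congr rfl fun j _ => by ring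
  have hintegrand : ∀ (k i j : Fin n), Integrable (fun ω => (C k i * C k j) * (η i ω * η j ω)) P :=
    fun k i j => (myMulIntegrable (hηL2 i) (hηL2 j)).const_mul _
  have hintval : ∫ ω, (1 / ((n : ℝ) * (p : ℝ) ^ 2)) *
        (X.mulVec (αhat ω - Eαhat) ⬝ᵥ X.mulVec (αhat ω - Eαhat)) ∂P
      = (1 / ((n : ℝ) * (p : ℝ) ^ 2)) * ∑ k, ∑ i, ∑ j,
          (C k i * C k j) * (σ^2 * ((if i = j then (1:ℝ) else 0) - 1/n)) := by
    simp only [hXveq]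
    rw [integral_const_mul]
    congr 1
    rw [integral_finset_sum _ fun k _ => integrable_finset_sum _ fun i _ =>
      integrable_finset_sum _ fun j _ => hintegrand k i j]
    refine Finset.sum_congr rfl fun k _ => ?_
    rw [integral_finset_sum _ fun i _ => integrable_finset_sum _ fun j _ => hintegrand k i j]
    refine Finset.sum_congr rfl fun i _ => ?_
    rw [integral_finset_sum _ fun j _ => hintegrand k i j]
    refine Finset.sum_congr rfl fun j _ => ?_
    rw [integral_const_mul, hcov i j]
  -- bound the sum
  have hkterm : ∀ k, ∑ i, ∑ j, (C k i * C k j) * (σ^2 * ((if i = j then (1:ℝ) else 0) - 1/n))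
      = σ^2 * (∑ i, C k i ^ 2) - (σ^2 / n) * (∑ i, C k i) ^ 2 := by
    intro k
    have hin : ∀ i, ∑ j, (C k i * C k j) * (σ^2 * ((if i = j then (1:ℝ) else 0) - 1/n))
        = σ^2 * C k i ^ 2 - (σ^2/n) * (C k i * ∑ j, C k j) := by
      intro i
      have hterm : ∀ j, (C k i * C k j) * (σ^2 * ((if i = j then (1:ℝ) else 0) - 1/n))
          = (if i = j then σ^2 * (C k i * C k j) else 0) - (σ^2/n) * (C k i * C k j) := by
        intro j; by_cases h : i = j <;> simp [h] <;> ring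
      rw [Finset.sum_congr rfl fun j _ => hterm j, Finset.sum_sub_distrib]
      simp only [Finset.sum_ite_eq, Finset.mem_univ, if_true]
      rw [show ∑ j, (σ^2/n) * (C k i * C k j) = (σ^2/n) * (C k i * ∑ j, C k j) by
        rw [← Finset.mul_sum, ← Finset.mul_sum]]
      ring
    rw [Finset.sum_congr rfl fun i _ => hin i, Finset.sum_sub_distrib, ← Finset.mul_sum,
      ← Finset.mul_sum, ← Finset.sum_mul, pow_two (∑ i, C k i)]
  have hsum_le : ∑ k, ∑ i, ∑ j, (C k i * C k j) * (σ^2 * ((if i = j then (1:ℝ) else 0) - 1/n))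
      ≤ σ^2 * ∑ k, ∑ i, C k i ^ 2 := by
    rw [Finset.sum_congr rfl fun k _ => hkterm k, Finset.mul_sum]
    refine Finset.sum_le_sum fun k _ => ?_
    exact sub_le_self _ (by positivity)
  -- trace identities
  have hCt : Cᵀ = C := by
    rw [hCdef, hDdef]
    simp [Matrix.transpose_mul, Matrix.transpose_smul, Matrix.transpose_transpose, hGsym,
      Matrix.smul_mul, Matrix.mul_smul, Matrix.mul_assoc]
  have hT2 : ∑ k, ∑ i, C k i ^ 2 = (C * C).trace := by
    rw [Matrix.trace]
    refine Finset.sum_congr rfl fun k _ => ?_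
    rw [Matrix.diag_apply, Matrix.mul_apply]
    refine Finset.sum_congr rfl fun i _ => ?_
    have h7 : C i k = C k i := by
      have h8 := congrFun (congrFun hCt k) i
      simpa [Matrix.transpose_apply] using h8
    rw [h7, pow_two]
  have htrCC : (C * C).trace = (1/(n:ℝ))^2 * (G * (Xᵀ * (X * (G * (Xᵀ * X))))).trace := by
    have e3 : C * C = ((1/(n:ℝ)) * (1/(n:ℝ))) • (X * (G * (Xᵀ * (X * (G * Xᵀ))))) := by
      rw [hCdef, hDdef]
      simp [Matrix.smul_mul, Matrix.mul_smul, smul_smul, Matrix.mul_assoc]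
    rw [e3, Matrix.trace_smul, Matrix.trace_mul_comm]
    rw [show (G * (Xᵀ * (X * (G * Xᵀ)))) * X = G * (Xᵀ * (X * (G * (Xᵀ * X)))) by
      simp [Matrix.mul_assoc]]
    rw [smul_eq_mul, pow_two]
  have htrGK : ((G * K) * (G * K)).trace
      = (1/((n:ℝ)*(p:ℝ)))^2 * (G * (Xᵀ * (X * (G * (Xᵀ * X))))).trace := by
    have e4 : (G * K) * (G * K)
        = ((1/((n:ℝ)*(p:ℝ))) * (1/((n:ℝ)*(p:ℝ)))) • (G * (Xᵀ * (X * (G * (Xᵀ * X))))) := by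
      rw [hKdef]
      simp [Matrix.smul_mul, Matrix.mul_smul, smul_smul, Matrix.mul_assoc]
    rw [e4, Matrix.trace_smul, smul_eq_mul, pow_two]
  -- key trace inequality
  have hGKG : (G * K * G).PosSemidef := by
    have h5 := hKpsd.mul_mul_conjTranspose_same G
    rwa [Matrix.conjTranspose_eq_transpose_of_trivial, hGsym] at h5
  have hρA : (ρ • A).PosSemidef := (myPosDefSmul hA hρ).posSemidef
  have hkey : ((G * K) * (G * K)).trace ≤ (G * K).trace := by
    have e6 : ρ • A = M - K := by rw [hM, add_sub_cancel_left]
    have e5 : G * K - (G * K) * (G * K) = (G * K * G) * (ρ • A) := by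
      rw [e6, mul_sub]
      congr 1
      · rw [mul_assoc (G * K) G M, hGM, mul_one]
      · simp [mul_assoc]
    have h6 := myTraceMulPsdNonneg hGKG hρA
    rw [← e5, Matrix.trace_sub] at h6
    linarith
  -- put everything together
  rw [hintval]
  calc (1 / ((n:ℝ) * (p:ℝ)^2)) * ∑ k, ∑ i, ∑ j,
        (C k i * C k j) * (σ^2 * ((if i = j then (1:ℝ) else 0) - 1/n))
      ≤ (1 / ((n:ℝ) * (p:ℝ)^2)) * (σ^2 * ∑ k, ∑ i, C k i ^ 2) :=
        mul_le_mul_of_nonneg_left hsum_le (by positivity)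
    _ = (σ^2 / (n:ℝ)) * ((G * K) * (G * K)).trace := by
        rw [hT2, htrCC, htrGK]
        generalize (G * (Xᵀ * (X * (G * (Xᵀ * X))))).trace = t
        field_simp
    _ ≤ (σ^2 / (n:ℝ)) * (G * K).trace :=
        mul_le_mul_of_nonneg_left hkey (by positivity)
end

section
/- Let p ≥ 1, m ≥ 1, q ≥ 0 (q real), C > 0, C₀ > 0 and ρ ∈ (0, 1]. Set k := ⌈ρ^{−1/(2m+2q+1)}⌉ and assume m + k + 1 ≤ p. Let S be a symmetric positive semidefinite real p×p matrix with eigenvalues λ₁ ≥ λ₂ ≥ … ≥ λ_p ≥ 0 satisfying Σ_{j=k+1}^p λ_j ≤ C·k^{−2q}, and let A be a symmetric positive definite real p×p matrix with eigenvalues 0 < μ₁ ≤ μ₂ ≤ … ≤ μ_p satisfying k^{2m} ≤ C₀·μ_{m+k+1}. Then Tr[ (S + ρ·A)⁻¹ · S ] ≤ m + k·(2 + C·C₀). -/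
open Matrix

variable {p : ℕ}

namespace Matrix.PosSemidef

open scoped MatrixOrder in
noncomputable def sqrt {X : Matrix (Fin p) (Fin p) ℝ} (_ : X.PosSemidef) :
    Matrix (Fin p) (Fin p) ℝ := CFC.sqrt X

open scoped MatrixOrder in
lemma sqrt_mul_self {X : Matrix (Fin p) (Fin p) ℝ} (hX : X.PosSemidef) :
    hX.sqrt * hX.sqrt = X := CFC.sqrt_mul_sqrt_self X hX.nonneg

open scoped MatrixOrder in
lemma posSemidef_sqrt {X : Matrix (Fin p) (Fin p) ℝ} (hX : X.PosSemidef) :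
    hX.sqrt.PosSemidef := (CFC.sqrt_nonneg X).posSemidef

end Matrix.PosSemidef

namespace Stmt2Aux

lemma trace_nonneg {M : Matrix (Fin p) (Fin p) ℝ} (hM : M.PosSemidef) : 0 ≤ M.trace := by
  rw [Matrix.trace]
  refine Finset.sum_nonneg fun i _ => ?_
  have := hM.dotProduct_mulVec_nonneg (Pi.single i 1)
  simpa [Matrix.mulVec_single, dotProduct, Pi.single_apply] using this

lemma trace_le {M N : Matrix (Fin p) (Fin p) ℝ} (h : (N - M).PosSemidef) :
    M.trace ≤ N.trace := by
  have := trace_nonneg h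
  rw [Matrix.trace_sub] at this
  linarith

lemma smul_psd {c : ℝ} {X : Matrix (Fin p) (Fin p) ℝ} (hc : 0 ≤ c) (hX : X.PosSemidef) :
    (c • X).PosSemidef := by
  refine Matrix.PosSemidef.of_dotProduct_mulVec_nonneg ?_ ?_
  · have h1 := hX.1
    rw [Matrix.IsHermitian] at h1 ⊢
    rw [Matrix.conjTranspose_smul, h1]
    simp
  · intro x
    have := hX.dotProduct_mulVec_nonneg x
    rw [Matrix.smul_mulVec, dotProduct_smul]
    exact smul_nonneg hc this

lemma conj_psd {X : Matrix (Fin p) (Fin p) ℝ} (hX : X.PosSemidef)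
    (W : Matrix (Fin p) (Fin p) ℝ) : (W * X * Wᵀ).PosSemidef := by
  have := hX.mul_mul_conjTranspose_same W
  rwa [Matrix.conjTranspose_eq_transpose_of_trivial] at this

lemma conj_psd' {X : Matrix (Fin p) (Fin p) ℝ} (hX : X.PosSemidef)
    (W : Matrix (Fin p) (Fin p) ℝ) : (Wᵀ * X * W).PosSemidef := by
  have := conj_psd hX Wᵀ
  rwa [Matrix.transpose_transpose] at this

lemma trace_mul_nonneg {X W : Matrix (Fin p) (Fin p) ℝ} (hX : X.PosSemidef)
    (hW : W.PosSemidef) : 0 ≤ (X * W).trace := by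
  have hs := hX.sqrt_mul_self
  have hR : (hX.sqrt)ᵀ = hX.sqrt := by
    have := hX.posSemidef_sqrt.1
    rwa [Matrix.IsHermitian, Matrix.conjTranspose_eq_transpose_of_trivial] at this
  calc (0:ℝ) ≤ (hX.sqrt * W * hX.sqrt).trace := by
        refine trace_nonneg ?_
        nth_rewrite 2 [← hR]
        exact conj_psd hW _
    _ = (X * W).trace := by
        rw [Matrix.trace_mul_cycle, hs]

lemma trace_mul_le {X W W' : Matrix (Fin p) (Fin p) ℝ} (hX : X.PosSemidef)
    (h : (W' - W).PosSemidef) : (X * W).trace ≤ (X * W').trace := by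
  have := trace_mul_nonneg hX h
  rw [Matrix.mul_sub, Matrix.trace_sub] at this
  linarith

lemma one_sub_transpose_mul {Y : Matrix (Fin p) (Fin p) ℝ}
    (h : (1 - Y * Yᵀ).PosSemidef) : (1 - Yᵀ * Y).PosSemidef := by
  have key : ∀ x : Fin p → ℝ, (Yᵀ *ᵥ x) ⬝ᵥ (Yᵀ *ᵥ x) ≤ x ⬝ᵥ x := by
    intro x
    have h2 := h.dotProduct_mulVec_nonneg x
    simp only [Matrix.sub_mulVec, dotProduct_sub, Matrix.one_mulVec, star_trivial] at h2
    have hid : x ⬝ᵥ ((Y * Yᵀ) *ᵥ x) = (Yᵀ *ᵥ x) ⬝ᵥ (Yᵀ *ᵥ x) := by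
      rw [← Matrix.mulVec_mulVec, Matrix.dotProduct_mulVec, ← Matrix.mulVec_transpose]
    linarith [h2, hid.symm.le]
  refine Matrix.PosSemidef.of_dotProduct_mulVec_nonneg ?_ ?_
  · have h1 : (1 - Y * Yᵀ).IsHermitian := h.1
    rw [Matrix.IsHermitian, Matrix.conjTranspose_eq_transpose_of_trivial] at h1 ⊢
    rw [Matrix.transpose_sub, Matrix.transpose_mul, Matrix.transpose_transpose,
      Matrix.transpose_one]
  · intro v
    simp only [star_trivial, Matrix.sub_mulVec, dotProduct_sub, Matrix.one_mulVec,
      sub_nonneg]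
    have hid : v ⬝ᵥ ((Yᵀ * Y) *ᵥ v) = (Y *ᵥ v) ⬝ᵥ (Y *ᵥ v) := by
      rw [← Matrix.mulVec_mulVec, Matrix.dotProduct_mulVec, Matrix.vecMul_transpose]
    rw [hid]
    have h1 : (Y *ᵥ v) ⬝ᵥ (Y *ᵥ v) = v ⬝ᵥ (Yᵀ *ᵥ (Y *ᵥ v)) := by
      rw [Matrix.dotProduct_mulVec v Yᵀ (Y *ᵥ v), Matrix.vecMul_transpose]
    have h2 : (Yᵀ *ᵥ (Y *ᵥ v)) ⬝ᵥ (Yᵀ *ᵥ (Y *ᵥ v)) ≤ (Y *ᵥ v) ⬝ᵥ (Y *ᵥ v) := key (Y *ᵥ v)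
    have hcs : (v ⬝ᵥ (Yᵀ *ᵥ (Y *ᵥ v))) ^ 2
        ≤ (v ⬝ᵥ v) * ((Yᵀ *ᵥ (Y *ᵥ v)) ⬝ᵥ (Yᵀ *ᵥ (Y *ᵥ v))) := by
      simpa [dotProduct, pow_two] using
        Finset.sum_mul_sq_le_sq_mul_sq Finset.univ v (Yᵀ *ᵥ (Y *ᵥ v))
    have ht0 : 0 ≤ (Y *ᵥ v) ⬝ᵥ (Y *ᵥ v) :=
      Finset.sum_nonneg fun i _ => mul_self_nonneg _
    have hv0 : 0 ≤ v ⬝ᵥ v := Finset.sum_nonneg fun i _ => mul_self_nonneg _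
    rcases eq_or_lt_of_le ht0 with h0 | h0
    · linarith
    · nlinarith [h1, h2, hcs]

lemma sum_indicator_le (n : ℕ) :
    ∑ j : Fin p, (if (j : ℕ) < n then (1:ℝ) else 0) ≤ n := by
  rw [Finset.sum_boole]
  have : (Finset.univ.filter (fun j : Fin p => (j : ℕ) < n)).card ≤ n := by
    have h : (Finset.univ.filter (fun j : Fin p => (j : ℕ) < n)).card
        ≤ (Finset.range n).card := by
      apply Finset.card_le_card_of_injOn (fun j : Fin p => (j : ℕ))
      · intro a ha
        exact Finset.mem_range.mpr (Finset.mem_filter.mp ha).2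
      · intro a _ b _ hab
        exact Fin.ext hab
    simpa using h
  exact_mod_cast this

end Stmt2Aux


/-- Matrix-analytic content of the variance bound (relation (3.2)) of
Theorem 1: with `k = ⌈ρ^{-1/(2m+2q+1)}⌉`, eigenvalue tail bound
`Σ_{j>k} λ_j ≤ C k^{-2q}` for `S`, and `k^{2m} ≤ C₀ μ_{m+k+1}` for the
penalty matrix `A`, one has `Tr[(S + ρA)⁻¹ S] ≤ m + k(2 + C·C₀)`. -/
theorem stmt2 {p m : ℕ} (hp : 1 ≤ p) (hm : 1 ≤ m)
    (q : ℝ) (hq : 0 ≤ q) (C C₀ : ℝ) (hC : 0 < C) (hC₀ : 0 < C₀)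
    (ρ : ℝ) (hρ0 : 0 < ρ) (hρ1 : ρ ≤ 1)
    (k : ℕ) (hk : k = ⌈ρ ^ (-(1 : ℝ) / (2 * (m : ℝ) + 2 * q + 1))⌉₊)
    (hkp : m + k + 1 ≤ p)
    (S A : Matrix (Fin p) (Fin p) ℝ) (hS : S.PosSemidef) (hA : A.PosDef)
    (lam : Fin p → ℝ) (hlam_anti : Antitone lam) (hlam_nonneg : ∀ j, 0 ≤ lam j)
    (U : Matrix (Fin p) (Fin p) ℝ) (hU : U ∈ Matrix.orthogonalGroup (Fin p) ℝ)
    (hSdiag : S = U * Matrix.diagonal lam * Uᵀ)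
    (μ : Fin p → ℝ) (hμ_mono : Monotone μ) (hμ_pos : ∀ j, 0 < μ j)
    (V : Matrix (Fin p) (Fin p) ℝ) (hV : V ∈ Matrix.orthogonalGroup (Fin p) ℝ)
    (hAdiag : A = V * Matrix.diagonal μ * Vᵀ)
    (htail : ∑ j ∈ Finset.univ.filter (fun j : Fin p => k ≤ (j : ℕ)), lam j
        ≤ C * (k : ℝ) ^ (-(2 : ℝ) * q))
    (hμbound : (k : ℝ) ^ (2 * m) ≤ C₀ * μ ⟨m + k, by omega⟩) :
    ((S + ρ • A)⁻¹ * S).trace ≤ (m : ℝ) + (k : ℝ) * (2 + C * C₀) := by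
  classical
  -- orthogonality
  have hUU : U * Uᵀ = 1 := by
    have h := (Matrix.mem_orthogonalGroup_iff (Fin p) ℝ).mp hU
    exact h
  have hUU' : Uᵀ * U = 1 := by
    have h := (Matrix.mem_orthogonalGroup_iff' (Fin p) ℝ).mp hU
    exact h
  have hVV : V * Vᵀ = 1 := by
    have h := (Matrix.mem_orthogonalGroup_iff (Fin p) ℝ).mp hV
    exact h
  have hVV' : Vᵀ * V = 1 := by
    have h := (Matrix.mem_orthogonalGroup_iff' (Fin p) ℝ).mp hV
    exact h
  -- generic helpers for conjugated diagonals
  have key_mul : ∀ (W : Matrix (Fin p) (Fin p) ℝ), Wᵀ * W = 1 → ∀ a b : Fin p → ℝ,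
      (W * Matrix.diagonal a * Wᵀ) * (W * Matrix.diagonal b * Wᵀ)
        = W * Matrix.diagonal (fun j => a j * b j) * Wᵀ := by
    intro W hW a b
    calc (W * Matrix.diagonal a * Wᵀ) * (W * Matrix.diagonal b * Wᵀ)
        = W * Matrix.diagonal a * (Wᵀ * W) * Matrix.diagonal b * Wᵀ := by
          noncomm_ring
      _ = W * (Matrix.diagonal a * Matrix.diagonal b) * Wᵀ := by
          rw [hW, Matrix.mul_one]; noncomm_ring
      _ = _ := by rw [Matrix.diagonal_mul_diagonal]
  have key_tr : ∀ (W : Matrix (Fin p) (Fin p) ℝ), Wᵀ * W = 1 → ∀ a : Fin p → ℝ,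
      (W * Matrix.diagonal a * Wᵀ).trace = ∑ j, a j := by
    intro W hW a
    rw [Matrix.trace_mul_cycle, hW, Matrix.one_mul, Matrix.trace_diagonal]
  have key_psd : ∀ (W : Matrix (Fin p) (Fin p) ℝ) (a : Fin p → ℝ), (∀ j, 0 ≤ a j) →
      (W * Matrix.diagonal a * Wᵀ).PosSemidef := fun W a ha =>
    Stmt2Aux.conj_psd (Matrix.posSemidef_diagonal_iff.mpr ha) W
  have key_transpose : ∀ (W : Matrix (Fin p) (Fin p) ℝ) (a : Fin p → ℝ),
      (W * Matrix.diagonal a * Wᵀ)ᵀ = W * Matrix.diagonal a * Wᵀ := by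
    intro W a
    rw [Matrix.transpose_mul, Matrix.transpose_mul, Matrix.transpose_transpose,
      Matrix.diagonal_transpose, Matrix.mul_assoc]
  -- numeric facts about k
  have hk1 : 1 ≤ k := by
    rw [hk]
    exact Nat.one_le_ceil_iff.mpr (Real.rpow_pos_of_pos hρ0 _)
  have hK0 : (0:ℝ) < (k:ℝ) := by exact_mod_cast hk1
  have hEpos : (0:ℝ) < 2 * (m:ℝ) + 2 * q + 1 := by positivity
  have hkE : 1 ≤ ρ * (k:ℝ) ^ (2 * (m:ℝ) + 2 * q + 1) := by
    have h1 : ρ ^ (-(1:ℝ) / (2 * (m:ℝ) + 2 * q + 1)) ≤ (k:ℝ) := by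
      rw [hk]; exact Nat.le_ceil _
    have h2 := Real.rpow_le_rpow (Real.rpow_pos_of_pos hρ0 _).le h1 hEpos.le
    rw [← Real.rpow_mul hρ0.le, div_mul_cancel₀ _ hEpos.ne', Real.rpow_neg_one] at h2
    rw [mul_comm]
    exact (inv_le_iff_one_le_mul₀ hρ0).mp h2
  have key : (k:ℝ) ^ (-(2:ℝ) * q) ≤ ρ * ((k:ℝ) ^ (2 * m) * (k:ℝ)) := by
    have e1 : (k:ℝ) ^ (2 * (m:ℝ) + 2 * q + 1)
        = (k:ℝ) ^ (2 * m + 1 : ℕ) * (k:ℝ) ^ ((2:ℝ) * q) := by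
      rw [← Real.rpow_natCast (k:ℝ) (2 * m + 1), ← Real.rpow_add hK0]
      congr 1
      push_cast
      ring
    have hab : (k:ℝ) ^ (-(2:ℝ) * q) * (k:ℝ) ^ ((2:ℝ) * q) = 1 := by
      rw [← Real.rpow_add hK0]
      norm_num
    have hb : 0 < (k:ℝ) ^ (-(2:ℝ) * q) := Real.rpow_pos_of_pos hK0 _
    rw [e1] at hkE
    have e2 : (k:ℝ) ^ (2 * m + 1 : ℕ) = (k:ℝ) ^ (2 * m) * (k:ℝ) := pow_succ _ _
    calc (k:ℝ) ^ (-(2:ℝ) * q) = (k:ℝ) ^ (-(2:ℝ) * q) * 1 := (mul_one _).symm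
      _ ≤ (k:ℝ) ^ (-(2:ℝ) * q) * (ρ * ((k:ℝ) ^ (2 * m + 1 : ℕ) * (k:ℝ) ^ ((2:ℝ) * q))) :=
          mul_le_mul_of_nonneg_left hkE hb.le
      _ = ρ * (k:ℝ) ^ (2 * m + 1 : ℕ)
          * ((k:ℝ) ^ (-(2:ℝ) * q) * (k:ℝ) ^ ((2:ℝ) * q)) := by ring
      _ = ρ * ((k:ℝ) ^ (2 * m) * (k:ℝ)) := by rw [hab, mul_one, e2]
  -- the matrix B and its square root
  have hρA : (ρ • A).PosDef := by
    refine Matrix.PosDef.of_dotProduct_mulVec_pos ?_ ?_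
    · have h1 := hA.1
      rw [Matrix.IsHermitian] at h1 ⊢
      rw [Matrix.conjTranspose_smul, h1]
      simp
    · intro x hx
      have h := hA.dotProduct_mulVec_pos hx
      rw [Matrix.smul_mulVec, dotProduct_smul]
      exact smul_pos hρ0 h
  have hB : (S + ρ • A).PosDef := Matrix.PosDef.posSemidef_add hS hρA
  set B := S + ρ • A with hBdef
  have hBpsd : B.PosSemidef := hB.posSemidef
  set F := hBpsd.sqrt with hFdef
  have hFF : F * F = B := hBpsd.sqrt_mul_self
  have hFT : Fᵀ = F := by
    have h := hBpsd.posSemidef_sqrt.1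
    rwa [Matrix.IsHermitian, Matrix.conjTranspose_eq_transpose_of_trivial] at h
  have hFdetUnit : IsUnit F.det := by
    rw [isUnit_iff_ne_zero]
    intro h0
    have hd : F.det * F.det = B.det := by rw [← Matrix.det_mul, hFF]
    rw [h0, mul_zero] at hd
    exact absurd hd.symm hB.det_pos.ne'
  set G := F⁻¹ with hGdef
  have hGF : G * F = 1 := Matrix.nonsing_inv_mul F hFdetUnit
  have hFG : F * G = 1 := Matrix.mul_nonsing_inv F hFdetUnit
  have hGT : Gᵀ = G := by rw [hGdef, Matrix.transpose_nonsing_inv, hFT]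
  have hGBG : G * B * G = 1 := by
    rw [← hFF]
    calc G * (F * F) * G = (G * F) * (F * G) := by noncomm_ring
      _ = 1 := by rw [hGF, hFG, Matrix.one_mul]
  have hBinv : B⁻¹ = G * G := by rw [← hFF, Matrix.mul_inv_rev]
  have conjG : ∀ {X : Matrix (Fin p) (Fin p) ℝ}, X.PosSemidef → (G * X * G).PosSemidef := by
    intro X hX
    have h := Stmt2Aux.conj_psd hX G
    rwa [hGT] at h
  -- the split of S
  set d1 : Fin p → ℝ := fun j => if (j:ℕ) < k then lam j else 0 with hd1def
  set d2 : Fin p → ℝ := fun j => if k ≤ (j:ℕ) then lam j else 0 with hd2def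
  set S1 := U * Matrix.diagonal d1 * Uᵀ with hS1def
  set S2 := U * Matrix.diagonal d2 * Uᵀ with hS2def
  have hS1S2 : S1 + S2 = S := by
    rw [hS1def, hS2def, hSdiag]
    rw [← Matrix.add_mul, ← Matrix.mul_add, Matrix.diagonal_add]
    have hdd : (fun i : Fin p => d1 i + d2 i) = lam := by
      funext j
      simp only [hd1def, hd2def]
      by_cases h : (j:ℕ) < k
      · simp [h, not_le.mpr h]
      · simp [h, not_lt.mp h]
    rw [hdd]
  have hd1nn : ∀ j, 0 ≤ d1 j := by
    intro j; simp only [hd1def]; split_ifs; exacts [hlam_nonneg j, le_rfl]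
  have hd2nn : ∀ j, 0 ≤ d2 j := by
    intro j; simp only [hd2def]; split_ifs; exacts [hlam_nonneg j, le_rfl]
  have hS1psd : S1.PosSemidef := key_psd U d1 hd1nn
  have hS2psd : S2.PosSemidef := key_psd U d2 hd2nn
  have hBS1 : (B - S1).PosSemidef := by
    have e : B - S1 = S2 + ρ • A := by rw [hBdef, ← hS1S2]; abel
    rw [e]
    exact hS2psd.add hρA.posSemidef
  have hBS2 : (B - S2).PosSemidef := by
    have e : B - S2 = S1 + ρ • A := by rw [hBdef, ← hS1S2]; abel
    rw [e]
    exact hS1psd.add hρA.posSemidef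
  -- PART 1 : trace (G * S1 * G) ≤ k
  have part1 : (G * S1 * G).trace ≤ (k:ℝ) := by
    set r1 : Fin p → ℝ := fun j => Real.sqrt (d1 j) with hr1def
    set R1 := U * Matrix.diagonal r1 * Uᵀ with hR1def
    have hR1T : R1ᵀ = R1 := key_transpose U r1
    have hR1sq : R1 * R1 = S1 := by
      rw [hR1def, key_mul U hUU', hS1def]
      have hrr : (fun j => r1 j * r1 j) = d1 := by
        funext j
        simp only [hr1def]
        exact Real.mul_self_sqrt (hd1nn j)
      rw [hrr]
    set e1 : Fin p → ℝ := fun j => if (j:ℕ) < k then (1:ℝ) else 0 with he1def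
    set P := U * Matrix.diagonal e1 * Uᵀ with hPdef
    have hPT : Pᵀ = P := key_transpose U e1
    have hPR : P * R1 = R1 := by
      rw [hPdef, hR1def, key_mul U hUU']
      have her : (fun j => e1 j * r1 j) = r1 := by
        funext j
        simp only [he1def, hr1def, hd1def]
        split_ifs with h
        · rw [one_mul]
        · rw [zero_mul, Real.sqrt_zero]
      rw [her]
    have hRP : R1 * P = R1 := by
      rw [hPdef, hR1def, key_mul U hUU']
      have hre : (fun j => r1 j * e1 j) = r1 := by
        funext j
        simp only [he1def, hr1def, hd1def]
        split_ifs with h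
        · rw [mul_one]
        · rw [mul_zero, Real.sqrt_zero]
      rw [hre]
    set Y := G * R1 with hYdef
    have hYYT : Y * Yᵀ = G * S1 * G := by
      rw [hYdef, Matrix.transpose_mul, hR1T, hGT]
      calc G * R1 * (R1 * G) = G * (R1 * R1) * G := by noncomm_ring
        _ = G * S1 * G := by rw [hR1sq]
    have h1YY : (1 - Y * Yᵀ).PosSemidef := by
      rw [hYYT]
      have h := Stmt2Aux.conj_psd hBS1 G
      have e : G * (B - S1) * Gᵀ = 1 - G * S1 * G := by
        rw [hGT, Matrix.mul_sub, Matrix.sub_mul, hGBG]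
      rwa [e] at h
    have h1YTY : (1 - Yᵀ * Y).PosSemidef := Stmt2Aux.one_sub_transpose_mul h1YY
    have hYTY : Yᵀ * Y = R1 * (G * G) * R1 := by
      rw [hYdef, Matrix.transpose_mul, hR1T, hGT]
      noncomm_ring
    have hPfix : P * (Yᵀ * Y) * P = Yᵀ * Y := by
      rw [hYTY]
      calc P * (R1 * (G * G) * R1) * P = (P * R1) * (G * G) * (R1 * P) := by noncomm_ring
        _ = R1 * (G * G) * R1 := by rw [hPR, hRP]
    have e0 : (G * S1 * G).trace = (P * (Yᵀ * Y) * P).trace := by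
      rw [hPfix, ← hYYT, Matrix.trace_mul_comm]
    rw [e0]
    have hmono : (P * (Yᵀ * Y) * P).trace ≤ (P * P).trace := by
      apply Stmt2Aux.trace_le
      have e : P * P - P * (Yᵀ * Y) * P = Pᵀ * (1 - Yᵀ * Y) * P := by
        rw [hPT, Matrix.mul_sub, Matrix.sub_mul, Matrix.mul_one]
      rw [e]
      exact Stmt2Aux.conj_psd' h1YTY P
    refine hmono.trans ?_
    rw [hPdef, key_mul U hUU', key_tr U hUU']
    have e : (fun j => e1 j * e1 j) = e1 := by
      funext j
      simp only [he1def]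
      split_ifs <;> norm_num
    rw [e, he1def]
    exact Stmt2Aux.sum_indicator_le k
  -- PART 2 : trace (G * S2 * G) ≤ (m+k) + c * (C * k^(-2q))
  set μs := μ ⟨m + k, by omega⟩ with hμsdef
  have hμs : 0 < μs := hμ_pos _
  set c : ℝ := 1 / (ρ * μs) with hcdef
  have hc : 0 < c := by rw [hcdef]; positivity
  set f : Fin p → ℝ := fun j => if (j:ℕ) < m + k then (1:ℝ) else 0 with hfdef
  set f' : Fin p → ℝ := fun j => if m + k ≤ (j:ℕ) then (1:ℝ) else 0 with hf'def
  set Q := V * Matrix.diagonal f * Vᵀ with hQdef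
  set Q' := V * Matrix.diagonal f' * Vᵀ with hQ'def
  have hQT : Qᵀ = Q := key_transpose V f
  have hQ2 : Q * Q = Q := by
    rw [hQdef, key_mul V hVV']
    have hff : (fun j => f j * f j) = f := by
      funext j
      simp only [hfdef]
      split_ifs <;> norm_num
    rw [hff]
  have hQsum : Q + Q' = 1 := by
    rw [hQdef, hQ'def, ← Matrix.add_mul, ← Matrix.mul_add, Matrix.diagonal_add]
    have e : (fun j => f j + f' j) = fun _ => (1:ℝ) := by
      funext j
      simp only [hfdef, hf'def]
      by_cases h : (j:ℕ) < m + k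
      · simp [h, not_le.mpr h]
      · simp [h, not_lt.mp h]
    rw [e, Matrix.diagonal_one, Matrix.mul_one, hVV]
  have hT2I : (1 - G * S2 * G).PosSemidef := by
    have h := Stmt2Aux.conj_psd hBS2 G
    have e : G * (B - S2) * Gᵀ = 1 - G * S2 * G := by
      rw [hGT, Matrix.mul_sub, Matrix.sub_mul, hGBG]
    rwa [e] at h
  have part2 : (G * S2 * G).trace ≤ ((m:ℝ) + k) + c * (C * (k:ℝ) ^ (-(2:ℝ) * q)) := by
    have hsplit : (G * S2 * G).trace
        = ((G * S2 * G) * Q).trace + ((G * S2 * G) * Q').trace := by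
      rw [← Matrix.trace_add, ← Matrix.mul_add, hQsum, Matrix.mul_one]
    rw [hsplit]
    have bound1 : ((G * S2 * G) * Q).trace ≤ (m:ℝ) + k := by
      have e0 : (G * S2 * G) * Q * Q = (G * S2 * G) * Q := by
        rw [Matrix.mul_assoc, hQ2]
      have e1 : ((G * S2 * G) * Q).trace = (Q * (G * S2 * G) * Q).trace := by
        rw [← e0, Matrix.trace_mul_cycle ((G * S2 * G)) Q Q]
      rw [e1]
      have hmono : (Q * (G * S2 * G) * Q).trace ≤ (Q * Q).trace := by
        apply Stmt2Aux.trace_le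
        have e : Q * Q - Q * (G * S2 * G) * Q = Qᵀ * (1 - G * S2 * G) * Q := by
          rw [hQT, Matrix.mul_sub, Matrix.sub_mul, Matrix.mul_one]
        rw [e]
        exact Stmt2Aux.conj_psd' hT2I Q
      refine hmono.trans ?_
      rw [hQ2, hQdef, key_tr V hVV']
      have h := Stmt2Aux.sum_indicator_le (p := p) (m + k)
      rw [hfdef]
      push_cast at h ⊢
      exact h
    have bound2 : ((G * S2 * G) * Q').trace ≤ c * (C * (k:ℝ) ^ (-(2:ℝ) * q)) := by
      have e1 : ((G * S2 * G) * Q').trace = (S2 * (G * Q' * G)).trace := by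
        calc ((G * S2 * G) * Q').trace = ((G * S2) * (G * Q')).trace := by
              rw [Matrix.mul_assoc (G * S2) G Q', Matrix.mul_assoc]
          _ = ((G * Q') * (G * S2)).trace := Matrix.trace_mul_comm _ _
          _ = ((G * Q' * G) * S2).trace := by rw [Matrix.mul_assoc (G * Q') G S2]
          _ = (S2 * (G * Q' * G)).trace := Matrix.trace_mul_comm _ _
      rw [e1]
      -- Q' ⪯ c • B hence G Q' G ⪯ c • 1
      have hcBQ : (c • B - Q').PosSemidef := by
        have e2 : (c * ρ) • (V * Matrix.diagonal μ * Vᵀ)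
            = V * Matrix.diagonal (fun j => c * ρ * μ j) * Vᵀ := by
          have ed : Matrix.diagonal (fun j => c * ρ * μ j)
              = (c * ρ) • Matrix.diagonal μ := by
            rw [← Matrix.diagonal_smul]
            congr 1
          rw [ed, mul_smul_comm, smul_mul_assoc]
        have e3 : V * Matrix.diagonal (fun j => c * ρ * μ j) * Vᵀ
              - V * Matrix.diagonal f' * Vᵀ
            = V * Matrix.diagonal (fun j => c * ρ * μ j - f' j) * Vᵀ := by
          rw [← Matrix.sub_mul, ← Matrix.mul_sub, Matrix.diagonal_sub]
        have hsub : c • B - Q'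
            = c • S + V * Matrix.diagonal (fun j => c * ρ * μ j - f' j) * Vᵀ := by
          calc c • B - Q'
              = c • S + ((c * ρ) • (V * Matrix.diagonal μ * Vᵀ) - Q') := by
                rw [hBdef, hAdiag, smul_add, smul_smul]; abel
            _ = c • S + V * Matrix.diagonal (fun j => c * ρ * μ j - f' j) * Vᵀ := by
                rw [e2, hQ'def, e3]
        rw [hsub]
        apply (Stmt2Aux.smul_psd hc.le hS).add
        apply key_psd
        intro j
        have hcρ : c * ρ = 1 / μs := by
          rw [hcdef]; field_simp
        rw [hcρ]
        simp only [hf'def]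
        split_ifs with h
        · have hle : μs ≤ μ j := by
            apply hμ_mono
            rw [Fin.le_def]
            exact h
          rw [sub_nonneg]
          rw [div_mul_eq_mul_div, one_mul, le_div_iff₀ hμs]
          linarith
        · have := (hμ_pos j).le
          have h2 : 0 ≤ 1 / μs * μ j := by positivity
          linarith [h2]
      have hZle : (S2 * (G * Q' * G)).trace
          ≤ (S2 * (c • (1 : Matrix (Fin p) (Fin p) ℝ))).trace := by
        apply Stmt2Aux.trace_mul_le hS2psd
        have e : c • (1 : Matrix (Fin p) (Fin p) ℝ) - G * Q' * G
            = G * (c • B - Q') * Gᵀ := by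
          rw [hGT, Matrix.mul_sub, Matrix.sub_mul]
          rw [mul_smul_comm, smul_mul_assoc, hGBG]
        rw [e]
        exact Stmt2Aux.conj_psd hcBQ G
      have e3 : (S2 * (c • (1 : Matrix (Fin p) (Fin p) ℝ))).trace = c * S2.trace := by
        rw [mul_smul_comm, Matrix.mul_one, Matrix.trace_smul]
        simp
      have e4 : S2.trace ≤ C * (k:ℝ) ^ (-(2:ℝ) * q) := by
        rw [hS2def, key_tr U hUU']
        rw [Finset.sum_filter] at htail
        simp only [hd2def]
        exact htail
      calc (S2 * (G * Q' * G)).trace ≤ c * S2.trace := by rw [← e3]; exact hZle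
        _ ≤ c * (C * (k:ℝ) ^ (-(2:ℝ) * q)) := by
            exact mul_le_mul_of_nonneg_left e4 hc.le
    linarith
  -- assemble
  have hmain : (B⁻¹ * S).trace = (G * S1 * G).trace + (G * S2 * G).trace := by
    rw [hBinv]
    have e0 : (G * G * S).trace = (G * S * G).trace :=
      (Matrix.trace_mul_cycle G S G).symm
    rw [e0, ← hS1S2, Matrix.mul_add, Matrix.add_mul, Matrix.trace_add]
  rw [hmain]
  -- final arithmetic
  have hfin : c * (C * (k:ℝ) ^ (-(2:ℝ) * q)) ≤ C * C₀ * (k:ℝ) := by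
    have h1 : c * (C * (k:ℝ) ^ (-(2:ℝ) * q))
        ≤ c * (C * (ρ * ((k:ℝ) ^ (2 * m) * (k:ℝ)))) := by
      apply mul_le_mul_of_nonneg_left _ hc.le
      exact mul_le_mul_of_nonneg_left key hC.le
    have h2 : c * (C * (ρ * ((k:ℝ) ^ (2 * m) * (k:ℝ))))
        = C * (k:ℝ) ^ (2 * m) * (k:ℝ) / μs := by
      rw [hcdef]
      field_simp
      try ring
    have h3 : C * (k:ℝ) ^ (2 * m) * (k:ℝ) / μs ≤ C * (C₀ * μs) * (k:ℝ) / μs := by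
      gcongr
      try exact hμbound
    have h4 : C * (C₀ * μs) * (k:ℝ) / μs = C * C₀ * (k:ℝ) := by
      field_simp
      try ring
    linarith
  have hk2 : ((m:ℝ) + k) + c * (C * (k:ℝ) ^ (-(2:ℝ) * q)) + (k:ℝ)
      ≤ (m:ℝ) + (k:ℝ) * (2 + C * C₀) := by
    nlinarith [hfin]
  linarith [part1, part2]
end

section
/- Let p ≥ 1 and let S be a symmetric positive semidefinite real p×p matrix with eigenvalues λ₁ ≥ λ₂ ≥ … ≥ λ_p ≥ 0, and let A be a symmetric positive definite real p×p matrix with eigenvalues 0 < μ₁ ≤ μ₂ ≤ … ≤ μ_p (each counted with multiplicity). Then for every ρ > 0 and all integers k ≥ 0, l ≥ 0 with k + l < p: Tr[ (S + ρ·A)⁻¹ · S ] ≤ l + 2·k + (1/(ρ·μ_{k+l+1}))·Σ_{j=k+1}^p λ_j. -/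
open Matrix

lemma trace_mul_eq_sum {p : ℕ} (A B : Matrix (Fin p) (Fin p) ℝ) :
    (A * B).trace = ∑ a, ∑ b, A a b * B b a := by
  simp [Matrix.trace, Matrix.diag, Matrix.mul_apply]

lemma trace_mul_vecMulVec {p : ℕ} (T : Matrix (Fin p) (Fin p) ℝ) (w : Fin p → ℝ) :
    (T * Matrix.vecMulVec w w).trace = w ⬝ᵥ (T *ᵥ w) := by
  rw [trace_mul_eq_sum]
  simp only [Matrix.vecMulVec_apply, dotProduct, Matrix.mulVec, Finset.mul_sum]
  refine Finset.sum_congr rfl fun a _ => Finset.sum_congr rfl fun b _ => by ring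

lemma dot_symm {p : ℕ} {P : Matrix (Fin p) (Fin p) ℝ} (hP : Pᵀ = P) (a b : Fin p → ℝ) :
    a ⬝ᵥ (P *ᵥ b) = (P *ᵥ a) ⬝ᵥ b := by
  rw [Matrix.dotProduct_mulVec, ← Matrix.mulVec_transpose, hP]

lemma trace_CDCt_mul {p : ℕ} (C X : Matrix (Fin p) (Fin p) ℝ) (d : Fin p → ℝ) :
    (C * Matrix.diagonal d * Cᵀ * X).trace
      = ∑ i, d i * ((fun a => C a i) ⬝ᵥ (X *ᵥ fun a => C a i)) := by
  have h1 : C * Matrix.diagonal d * Cᵀ * X = (C * Matrix.diagonal d) * (Cᵀ * X) := by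
    rw [mul_assoc]
  rw [h1, Matrix.trace_mul_comm]
  have h2 : Cᵀ * X * (C * Matrix.diagonal d) = (Cᵀ * X * C) * Matrix.diagonal d := by
    rw [← mul_assoc]
  rw [h2, Matrix.trace_mul_comm]
  simp only [Matrix.trace, Matrix.diag, Matrix.mul_apply, Matrix.diagonal_apply,
    Matrix.transpose_apply, dotProduct, Matrix.mulVec, ite_mul, zero_mul]
  simp only [Finset.sum_ite_eq, Finset.mem_univ, if_true, Finset.mul_sum, Finset.sum_mul]
  refine Finset.sum_congr rfl fun i _ => ?_
  rw [Finset.sum_comm]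
  refine Finset.sum_congr rfl fun a _ => Finset.sum_congr rfl fun b _ => by ring

set_option maxHeartbeats 1000000 in
/-- General trace inequality from the chain (6.1)–(6.4) in the proof of
Theorem 1: `Tr[(S + ρA)⁻¹ S] ≤ l + 2k + (1/(ρ μ_{k+l+1})) Σ_{j=k+1}^p λ_j`,
where `λ₁ ≥ … ≥ λ_p ≥ 0` are the eigenvalues of `S` and
`0 < μ₁ ≤ … ≤ μ_p` those of `A`. -/
theorem stmt3 {p : ℕ} (hp : 1 ≤ p)
    (S A : Matrix (Fin p) (Fin p) ℝ) (hS : S.PosSemidef) (hA : A.PosDef)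
    (lam : Fin p → ℝ) (hlam_anti : Antitone lam) (hlam_nonneg : ∀ j, 0 ≤ lam j)
    (U : Matrix (Fin p) (Fin p) ℝ) (hU : U ∈ Matrix.orthogonalGroup (Fin p) ℝ)
    (hSdiag : S = U * Matrix.diagonal lam * Uᵀ)
    (μ : Fin p → ℝ) (hμ_mono : Monotone μ) (hμ_pos : ∀ j, 0 < μ j)
    (V : Matrix (Fin p) (Fin p) ℝ) (hV : V ∈ Matrix.orthogonalGroup (Fin p) ℝ)
    (hAdiag : A = V * Matrix.diagonal μ * Vᵀ)
    (ρ : ℝ) (hρ : 0 < ρ) (k l : ℕ) (hkl : k + l < p) :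
    ((S + ρ • A)⁻¹ * S).trace ≤ (l : ℝ) + 2 * (k : ℝ) +
      (1 / (ρ * μ ⟨k + l, hkl⟩)) *
        ∑ j ∈ Finset.univ.filter (fun j : Fin p => k ≤ (j : ℕ)), lam j := by
  classical
  have hstar : ∀ x : Fin p → ℝ, star x = x := fun x => by
    funext a; simp
  set μs : ℝ := μ ⟨k + l, hkl⟩ with hμs
  have hμspos : 0 < μs := hμ_pos _
  have hρμ : 0 < ρ * μs := mul_pos hρ hμspos
  -- orthogonality of U, V
  have hUtU : Uᵀ * U = 1 := by
    have h2 := Matrix.mem_orthogonalGroup_iff' (Fin p) ℝ |>.mp hU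
    exact h2
  have hVtV : Vᵀ * V = 1 := by
    have h2 := Matrix.mem_orthogonalGroup_iff' (Fin p) ℝ |>.mp hV
    exact h2
  have hVVt : V * Vᵀ = 1 := by
    have h2 := Matrix.mem_orthogonalGroup_iff (Fin p) ℝ |>.mp hV
    exact h2
  -- M and its square root
  set M : Matrix (Fin p) (Fin p) ℝ := S + ρ • A with hMdef
  have hApsd : (ρ • A).PosSemidef := by
    have hherm : (ρ • A).IsHermitian := by
      show (ρ • A)ᴴ = ρ • A
      rw [Matrix.conjTranspose_smul, hA.1, star_trivial]
    refine Matrix.PosSemidef.of_dotProduct_mulVec_nonneg hherm fun x => ?_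
    rw [Matrix.smul_mulVec, dotProduct_smul, smul_eq_mul]
    exact mul_nonneg hρ.le (hA.posSemidef.dotProduct_mulVec_nonneg x)
  have hMpd : M.PosDef := by
    refine Matrix.PosDef.of_dotProduct_mulVec_pos (hS.1.add hApsd.1) fun x hx => ?_
    rw [Matrix.add_mulVec, dotProduct_add]
    have h1 : (0:ℝ) < star x ⬝ᵥ ((ρ • A) *ᵥ x) := by
      rw [Matrix.smul_mulVec, dotProduct_smul, smul_eq_mul]
      exact mul_pos hρ (hA.dotProduct_mulVec_pos hx)
    exact add_pos_of_nonneg_of_pos (hS.dotProduct_mulVec_nonneg x) h1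
  set R : Matrix (Fin p) (Fin p) ℝ := (open scoped MatrixOrder in CFC.sqrt M) with hRdef
  have hRpsd : R.PosSemidef := by
    open scoped MatrixOrder in exact Matrix.nonneg_iff_posSemidef.mp (CFC.sqrt_nonneg M)
  have hRR : R * R = M := by
    open scoped MatrixOrder in exact CFC.sqrt_mul_sqrt_self M (Matrix.nonneg_iff_posSemidef.mpr hMpd.posSemidef)
  have hRsym : Rᵀ = R := by
    have := hRpsd.1
    rwa [Matrix.IsHermitian, Matrix.conjTranspose_eq_transpose_of_trivial] at this
  have hRdet : IsUnit R.det := by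
    rw [isUnit_iff_ne_zero]
    intro h0
    have : M.det = R.det * R.det := by rw [← hRR, Matrix.det_mul]
    have := hMpd.det_pos
    rw [‹M.det = R.det * R.det›, h0, mul_zero] at this
    exact lt_irrefl _ this
  set Ri : Matrix (Fin p) (Fin p) ℝ := R⁻¹ with hRidef
  have hRiR : Ri * R = 1 := Matrix.nonsing_inv_mul R hRdet
  have hRRi : R * Ri = 1 := Matrix.mul_nonsing_inv R hRdet
  have hRisym : Riᵀ = Ri := by rw [hRidef, Matrix.transpose_nonsing_inv, hRsym]
  set T : Matrix (Fin p) (Fin p) ℝ := Ri * S * Ri with hTdef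
  have hRMR : Ri * M * Ri = 1 := by
    rw [← hRR, ← mul_assoc, mul_assoc (Ri * R), hRiR, one_mul, hRRi]
  have hLHS : ((S + ρ • A)⁻¹ * S).trace = T.trace := by
    have hMi : M⁻¹ = Ri * Ri := by rw [← hRR, Matrix.mul_inv_rev, ← hRidef]
    have : (S + ρ • A)⁻¹ = M⁻¹ := by rw [hMdef]
    rw [this, hMi, mul_assoc, Matrix.trace_mul_comm]
  have hIT : (1 - T).PosSemidef := by
    have key : Ri * (ρ • A) * Ri = 1 - T := by
      have h1 : (ρ • A : Matrix (Fin p) (Fin p) ℝ) = M - S := by rw [hMdef]; abel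
      rw [h1, Matrix.mul_sub, Matrix.sub_mul, hTdef, hRMR]
    have h2 := hApsd.mul_mul_conjTranspose_same Ri
    rwa [Matrix.conjTranspose_eq_transpose_of_trivial, hRisym, key] at h2
  have hTQhelp : ∀ w : Fin p → ℝ, w ⬝ᵥ (T *ᵥ w) ≤ w ⬝ᵥ w := by
    intro w
    have h1 := hIT.dotProduct_mulVec_nonneg w
    rw [hstar, Matrix.sub_mulVec, Matrix.one_mulVec, dotProduct_sub, sub_nonneg] at h1
    exact h1
  -- vectors
  set u : Fin p → Fin p → ℝ := fun i a => U a i with hu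
  set v : Fin p → Fin p → ℝ := fun j a => V a j with hv
  set c : Fin p → Fin p → ℝ := fun i => Ri *ᵥ u i with hc
  -- the subspace W
  set g : Fin k ⊕ Fin (k + l) → EuclideanSpace ℝ (Fin p) :=
    Sum.elim (fun i => WithLp.toLp 2 (c ⟨i.1, by omega⟩)) (fun j => WithLp.toLp 2 (Ri *ᵥ v ⟨j.1, by omega⟩)) with hg
  set W : Submodule ℝ (EuclideanSpace ℝ (Fin p)) := Submodule.span ℝ (Set.range g) with hW
  have hrank : (Module.finrank ℝ W : ℝ) ≤ 2 * (k:ℝ) + l := by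
    have h1 : Module.finrank ℝ W ≤ Fintype.card (Fin k ⊕ Fin (k + l)) :=
      finrank_range_le_card g
    rw [Fintype.card_sum, Fintype.card_fin, Fintype.card_fin] at h1
    have : ((k + (k + l) : ℕ) : ℝ) = 2 * (k:ℝ) + l := by push_cast; ring
    calc (Module.finrank ℝ W : ℝ) ≤ ((k + (k + l) : ℕ) : ℝ) := by exact_mod_cast h1
      _ = 2 * (k:ℝ) + l := this
  set d := Module.finrank ℝ W with hd
  set b := stdOrthonormalBasis ℝ W with hb
  set f : Fin d → Fin p → ℝ := fun m => WithLp.ofLp (b m : EuclideanSpace ℝ (Fin p)) with hf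
  have hip : ∀ x y : EuclideanSpace ℝ (Fin p),
      (inner ℝ x y : ℝ) = (WithLp.ofLp x : Fin p → ℝ) ⬝ᵥ (WithLp.ofLp y : Fin p → ℝ) := by
    intro x y
    rw [PiLp.inner_apply]
    simp [RCLike.inner_apply, dotProduct, mul_comm]
  have hf_dot : ∀ m m', f m ⬝ᵥ f m' = if m = m' then 1 else 0 := by
    intro m m'
    have h1 := orthonormal_iff_ite.mp b.orthonormal m m'
    rw [Submodule.coe_inner, hip] at h1
    exact h1
  have hfW : ∀ m, WithLp.toLp 2 (f m) ∈ W := fun m => (b m).2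
  set Q : Matrix (Fin p) (Fin p) ℝ := ∑ m, Matrix.vecMulVec (f m) (f m) with hQ
  have hQsym : Qᵀ = Q := by
    ext a e
    simp only [hQ, Matrix.transpose_apply, Matrix.sum_apply, Matrix.vecMulVec_apply]
    exact Finset.sum_congr rfl fun m _ => by ring
  have hQmulVec : ∀ x, Q *ᵥ x = ∑ m, (f m ⬝ᵥ x) • f m := by
    intro x
    funext a
    simp only [Matrix.mulVec, hQ, Matrix.sum_apply, Matrix.vecMulVec_apply, dotProduct,
      Finset.sum_apply, Pi.smul_apply, smul_eq_mul, Finset.sum_mul, Finset.mul_sum]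
    rw [Finset.sum_comm]
    exact Finset.sum_congr rfl fun m _ => Finset.sum_congr rfl fun e _ => by ring
  have hQrange : ∀ x, WithLp.toLp 2 (Q *ᵥ x) ∈ W := by
    intro x
    rw [hQmulVec, WithLp.toLp_sum]
    exact Submodule.sum_mem _ fun m _ => by
      rw [WithLp.toLp_smul]; exact Submodule.smul_mem _ _ (hfW m)
  have hQfix : ∀ x : Fin p → ℝ, WithLp.toLp 2 x ∈ W → Q *ᵥ x = x := by
    intro x hx
    have h0 := b.sum_repr' (⟨WithLp.toLp 2 x, hx⟩ : W)
    have h1 := congrArg (Subtype.val : W → EuclideanSpace ℝ (Fin p)) h0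
    rw [hQmulVec]
    have h2 : ((∑ m, (inner ℝ (b m) (⟨WithLp.toLp 2 x, hx⟩ : W) : ℝ) • b m : W) : EuclideanSpace ℝ (Fin p))
        = ∑ m, (inner ℝ (b m) (⟨WithLp.toLp 2 x, hx⟩ : W) : ℝ) • (b m : EuclideanSpace ℝ (Fin p)) := by
      push_cast
      try rfl
    rw [h2] at h1
    calc (∑ m, (f m ⬝ᵥ x) • f m : Fin p → ℝ)
        = WithLp.ofLp (∑ m, (inner ℝ (b m) (⟨WithLp.toLp 2 x, hx⟩ : W) : ℝ) • (b m : EuclideanSpace ℝ (Fin p))) := by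
          rw [WithLp.ofLp_sum]
          refine Finset.sum_congr rfl fun m _ => ?_
          rw [WithLp.ofLp_smul, Submodule.coe_inner, hip]
          try rfl
      _ = x := by rw [h1]
  have horth : ∀ w : Fin p → ℝ, WithLp.toLp 2 w ∈ W →
      ∀ x, w ⬝ᵥ (x - Q *ᵥ x) = 0 := by
    intro w hw x
    rw [dotProduct_sub, dot_symm hQsym, hQfix w hw, sub_self]
  -- split the trace
  have hsplit : T.trace = (T * Q).trace + (T * (1 - Q)).trace := by
    rw [Matrix.mul_sub, Matrix.mul_one, Matrix.trace_sub]; ring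
  have hTQ : (T * Q).trace ≤ (d : ℝ) := by
    rw [hQ, Matrix.mul_sum, Matrix.trace_sum]
    have h1 : ∀ m : Fin d, (T * Matrix.vecMulVec (f m) (f m)).trace ≤ 1 := by
      intro m
      rw [trace_mul_vecMulVec]
      have := hTQhelp (f m)
      have h2 : f m ⬝ᵥ f m = 1 := by rw [hf_dot]; simp
      linarith
    calc (∑ m, (T * Matrix.vecMulVec (f m) (f m)).trace) ≤ ∑ _m : Fin d, (1:ℝ) :=
          Finset.sum_le_sum fun m _ => h1 m
      _ = (d : ℝ) := by simp
  set z : Fin p → Fin p → ℝ := fun i => c i - Q *ᵥ c i with hz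
  have hzi : ∀ i, z i = c i - Q *ᵥ c i := fun i => by simp only [hz]
  have hcz : ∀ i, c i ⬝ᵥ z i = z i ⬝ᵥ z i := by
    intro i
    have h1 := horth (Q *ᵥ c i) (hQrange (c i)) (c i)
    have h2 : c i ⬝ᵥ z i - z i ⬝ᵥ z i = (Q *ᵥ c i) ⬝ᵥ (c i - Q *ᵥ c i) := by
      rw [hzi i]
      simp only [sub_dotProduct, dotProduct_sub]
      ring
    rw [h1] at h2
    linarith
  have hTrest : (T * (1 - Q)).trace = ∑ i, lam i * (z i ⬝ᵥ z i) := by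
    have hCT : T = (Ri * U) * Matrix.diagonal lam * (Ri * U)ᵀ := by
      rw [hTdef, hSdiag, Matrix.transpose_mul, hRisym]
      simp only [mul_assoc]
    have hcol : ∀ i, (fun a => (Ri * U) a i) = c i := by
      intro i
      funext a
      simp [Matrix.mul_apply, hc, Matrix.mulVec, dotProduct, hu]
    rw [hCT, trace_CDCt_mul]
    refine Finset.sum_congr rfl fun i _ => ?_
    rw [hcol i, Matrix.sub_mulVec, Matrix.one_mulVec, ← hzi i, hcz]
  have hz_zero : ∀ i : Fin p, (i : ℕ) < k → z i = 0 := by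
    intro i hik
    have hmem : WithLp.toLp 2 (c i) ∈ W := by
      apply Submodule.subset_span
      refine ⟨Sum.inl ⟨i.1, hik⟩, ?_⟩
      simp [hg]
    rw [hzi i, hQfix (c i) hmem, sub_self]
  have hz_nonneg : ∀ i : Fin p, 0 ≤ z i ⬝ᵥ z i := fun i => by
    simpa [hstar] using dotProduct_star_self_nonneg (z i)
  have hz_bound : ∀ i : Fin p, z i ⬝ᵥ z i ≤ 1 / (ρ * μs) := by
    intro i
    set y : Fin p → ℝ := Ri *ᵥ z i with hy
    have hyz : R *ᵥ y = z i := by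
      rw [hy, Matrix.mulVec_mulVec, hRRi, Matrix.one_mulVec]
    have hvy : ∀ j : Fin p, (j : ℕ) < k + l → v j ⬝ᵥ y = 0 := by
      intro j hjkl
      have hmem : WithLp.toLp 2 (Ri *ᵥ v j : Fin p → ℝ) ∈ W := by
        apply Submodule.subset_span
        refine ⟨Sum.inr ⟨j.1, hjkl⟩, ?_⟩
        simp [hg]
      have := horth (Ri *ᵥ v j) hmem (c i)
      rw [hy, dot_symm hRisym, hzi i]
      exact this
    have hwdef : ∀ j, (Vᵀ *ᵥ y) j = v j ⬝ᵥ y := by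
      intro j
      simp [Matrix.mulVec, dotProduct, hv]
    have hAy : y ⬝ᵥ (A *ᵥ y) = ∑ j, μ j * ((Vᵀ *ᵥ y) j)^2 := by
      rw [hAdiag, ← Matrix.mulVec_mulVec, ← Matrix.mulVec_mulVec,
        Matrix.dotProduct_mulVec y V, ← Matrix.mulVec_transpose]
      simp only [dotProduct, Matrix.mulVec_diagonal]
      exact Finset.sum_congr rfl fun j _ => by ring
    have hVy : (Vᵀ *ᵥ y) ⬝ᵥ (Vᵀ *ᵥ y) = y ⬝ᵥ y := by
      rw [Matrix.dotProduct_mulVec, ← Matrix.mulVec_transpose, Matrix.transpose_transpose,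
        Matrix.mulVec_mulVec, hVVt, Matrix.one_mulVec]
    have hAy2 : μs * (y ⬝ᵥ y) ≤ y ⬝ᵥ (A *ᵥ y) := by
      rw [hAy, ← hVy]
      have : (Vᵀ *ᵥ y) ⬝ᵥ (Vᵀ *ᵥ y) = ∑ j, ((Vᵀ *ᵥ y) j)^2 := by
        simp [dotProduct, pow_two]
      rw [this, Finset.mul_sum]
      refine Finset.sum_le_sum fun j _ => ?_
      by_cases hj : (j : ℕ) < k + l
      · rw [hwdef j, hvy j hj]
        simp
      · have : μs ≤ μ j := hμ_mono (by simp [Fin.le_def]; omega)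
        nlinarith [sq_nonneg ((Vᵀ *ᵥ y) j)]
    have hSy : 0 ≤ y ⬝ᵥ (S *ᵥ y) := by
      have := hS.dotProduct_mulVec_nonneg y
      rwa [hstar] at this
    have hMsym : Mᵀ = M := by
      have := hMpd.1
      rwa [Matrix.IsHermitian, Matrix.conjTranspose_eq_transpose_of_trivial] at this
    have hzz : z i ⬝ᵥ z i = y ⬝ᵥ (M *ᵥ y) := by
      rw [← hyz, dot_symm hRsym, Matrix.mulVec_mulVec, hRR]
      exact (dot_symm hMsym y y).symm
    have hlower : ρ * μs * (y ⬝ᵥ y) ≤ z i ⬝ᵥ z i := by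
      rw [hzz, hMdef, Matrix.add_mulVec, dotProduct_add, Matrix.smul_mulVec,
        dotProduct_smul, smul_eq_mul]
      nlinarith
    have hciz : c i ⬝ᵥ z i = u i ⬝ᵥ y := by
      rw [hc, hy]
      rw [dot_symm hRisym]
    have hui : u i ⬝ᵥ u i = 1 := by
      have h1 : (Uᵀ * U) i i = (1 : Matrix (Fin p) (Fin p) ℝ) i i := by rw [hUtU]
      simp only [Matrix.mul_apply, Matrix.transpose_apply, Matrix.one_apply_eq] at h1
      simpa [dotProduct, hu] using h1
    have hCS : (u i ⬝ᵥ y)^2 ≤ (u i ⬝ᵥ u i) * (y ⬝ᵥ y) := by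
      simpa [dotProduct, pow_two] using
        Finset.sum_mul_sq_le_sq_mul_sq Finset.univ (u i) y
    rw [hui, one_mul] at hCS
    have ht : (z i ⬝ᵥ z i)^2 ≤ (z i ⬝ᵥ z i) / (ρ * μs) := by
      have h1 : (z i ⬝ᵥ z i)^2 = (u i ⬝ᵥ y)^2 := by rw [← hciz, hcz]
      have h2 : y ⬝ᵥ y ≤ (z i ⬝ᵥ z i) / (ρ * μs) := by
        rw [le_div_iff₀ hρμ]
        linarith
      calc (z i ⬝ᵥ z i)^2 = (u i ⬝ᵥ y)^2 := h1
        _ ≤ y ⬝ᵥ y := hCS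
        _ ≤ (z i ⬝ᵥ z i) / (ρ * μs) := h2
    rcases eq_or_lt_of_le (hz_nonneg i) with h0 | h0
    · rw [← h0]
      positivity
    · have ht' := (le_div_iff₀ hρμ).mp ht
      have h3 : (z i ⬝ᵥ z i) * (ρ * μs) ≤ 1 := by nlinarith [ht', h0]
      rw [le_div_iff₀ hρμ]
      exact h3
  have hsum : ∑ i, lam i * (z i ⬝ᵥ z i)
      ≤ (1 / (ρ * μs)) * ∑ j ∈ Finset.univ.filter (fun j : Fin p => k ≤ (j : ℕ)), lam j := by
    rw [Finset.mul_sum]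
    rw [← Finset.sum_filter_add_sum_filter_not Finset.univ (fun j : Fin p => k ≤ (j : ℕ))]
    have h2 : ∑ i ∈ Finset.univ.filter (fun j : Fin p => ¬ k ≤ (j : ℕ)), lam i * (z i ⬝ᵥ z i) = 0 := by
      refine Finset.sum_eq_zero fun i hi => ?_
      rw [Finset.mem_filter] at hi
      rw [hz_zero i (by omega), zero_dotProduct, mul_zero]
    rw [h2, add_zero]
    refine Finset.sum_le_sum fun i _ => ?_
    rw [mul_comm (1 / (ρ * μs)) (lam i)]
    exact mul_le_mul_of_nonneg_left (hz_bound i) (hlam_nonneg i)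
  calc ((S + ρ • A)⁻¹ * S).trace = T.trace := hLHS
    _ = (T * Q).trace + (T * (1 - Q)).trace := hsplit
    _ ≤ (d : ℝ) + ∑ i, lam i * (z i ⬝ᵥ z i) := by rw [hTrest]; exact add_le_add hTQ le_rfl
    _ ≤ (2 * (k:ℝ) + l) + (1 / (ρ * μs)) * ∑ j ∈ Finset.univ.filter (fun j : Fin p => k ≤ (j : ℕ)), lam j :=
        add_le_add hrank hsum
    _ = (l : ℝ) + 2 * (k : ℝ) + (1 / (ρ * μs)) * ∑ j ∈ Finset.univ.filter (fun j : Fin p => k ≤ (j : ℕ)), lam j := by ring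
end

section
/- Let p ≥ 1, let S be a symmetric positive semidefinite real p×p matrix, let A be a symmetric positive definite real p×p matrix with smallest eigenvalue μ₁ > 0, and let ρ > 0. Then for every v ∈ ℝ^p, vᵀ·(S + ρ·A)⁻¹·S·(S + ρ·A)⁻¹·v ≤ (1/(ρ·μ₁))·vᵀ·v. -/
open Matrix

/-- Bound on the second term of decomposition (6.6) in the proof of
Theorem 2: if `μ₁ > 0` is the smallest eigenvalue of `A` (so that
`μ₁ vᵀv ≤ vᵀAv` for all `v`), then
`vᵀ (S + ρA)⁻¹ S (S + ρA)⁻¹ v ≤ (1/(ρ μ₁)) vᵀ v`. -/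
theorem stmt13 {p : ℕ} (hp : 1 ≤ p)
    (S A : Matrix (Fin p) (Fin p) ℝ) (hS : S.PosSemidef) (hA : A.PosDef)
    (μ₁ : ℝ) (hμ₁ : 0 < μ₁)
    (hmuA : ∀ v : Fin p → ℝ, μ₁ * (v ⬝ᵥ v) ≤ v ⬝ᵥ A.mulVec v)
    (ρ : ℝ) (hρ : 0 < ρ) :
    ∀ v : Fin p → ℝ,
      v ⬝ᵥ ((S + ρ • A)⁻¹ * S * (S + ρ • A)⁻¹).mulVec v ≤
        (1 / (ρ * μ₁)) * (v ⬝ᵥ v) := by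
  intro v
  set M : Matrix (Fin p) (Fin p) ℝ := S + ρ • A with hMdef
  have hρA : (ρ • A).PosDef := by
    refine Matrix.PosDef.of_dotProduct_mulVec_pos ?_ (fun x hx => ?_)
    · rw [IsHermitian, conjTranspose_smul, hA.1]
      simp
    · rw [smul_mulVec, dotProduct_smul, smul_eq_mul]
      exact mul_pos hρ (hA.dotProduct_mulVec_pos hx)
  have hM : M.PosDef := Matrix.PosDef.posSemidef_add hS hρA
  have hMunit : IsUnit M.det := hM.det_pos.ne'.isUnit
  have hMsymm : Mᵀ = M := hM.1
  -- w = M⁻¹ v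
  set w : Fin p → ℝ := M⁻¹.mulVec v with hwdef
  have hv : M.mulVec w = v := by
    rw [hwdef, mulVec_mulVec, mul_nonsing_inv M hMunit, one_mulVec]
  -- LHS = w ⬝ S w
  have hLHS : v ⬝ᵥ (M⁻¹ * S * M⁻¹).mulVec v = w ⬝ᵥ S.mulVec w := by
    rw [← mulVec_mulVec, ← mulVec_mulVec, dotProduct_mulVec v M⁻¹,
      ← mulVec_transpose, transpose_nonsing_inv, hMsymm]
  have hMinv_symm : (M⁻¹)ᵀ = M⁻¹ := by rw [transpose_nonsing_inv, hMsymm]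
  -- t = w ⬝ v = wᵀ M w
  have ht : w ⬝ᵥ v = w ⬝ᵥ M.mulVec w := by rw [hv]
  have htS : w ⬝ᵥ S.mulVec w ≤ w ⬝ᵥ v := by
    rw [ht, hMdef, add_mulVec, dotProduct_add]
    have h2 : 0 ≤ w ⬝ᵥ (ρ • A).mulVec w := by simpa using hρA.posSemidef.dotProduct_mulVec_nonneg w
    linarith
  have ht0 : 0 ≤ w ⬝ᵥ v := by rw [ht]; simpa using hM.posSemidef.dotProduct_mulVec_nonneg w
  have hc0 : 0 ≤ v ⬝ᵥ v := by
    simpa [dotProduct] using Finset.sum_nonneg fun i _ => mul_self_nonneg (v i)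
  -- ρ μ₁ (w⬝w) ≤ w ⬝ v
  have hlow : ρ * μ₁ * (w ⬝ᵥ w) ≤ w ⬝ᵥ v := by
    rw [ht, hMdef, add_mulVec, dotProduct_add, smul_mulVec, dotProduct_smul,
      smul_eq_mul]
    have h1 : 0 ≤ w ⬝ᵥ S.mulVec w := by simpa using hS.dotProduct_mulVec_nonneg w
    have h2 := hmuA w
    nlinarith
  -- Cauchy-Schwarz: (w ⬝ v)² ≤ (w⬝w)(v⬝v)
  have hCS : (w ⬝ᵥ v) ^ 2 ≤ (w ⬝ᵥ w) * (v ⬝ᵥ v) := by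
    have := Finset.sum_mul_sq_le_sq_mul_sq Finset.univ w v
    simpa [dotProduct, pow_two, Finset.sum_mul_sum] using this
  rw [hLHS]
  have key : w ⬝ᵥ v ≤ (1 / (ρ * μ₁)) * (v ⬝ᵥ v) := by
    rcases eq_or_lt_of_le ht0 with h | h
    · rw [← h]
      positivity
    · rw [div_mul_eq_mul_div, one_mul, le_div_iff₀ (by positivity)]
      nlinarith [mul_le_mul_of_nonneg_right hlow hc0,
        mul_le_mul_of_nonneg_left hCS (le_of_lt (mul_pos hρ hμ₁))]
  linarith
end

section
/- Let p ≥ 1, let S be a symmetric positive semidefinite real p×p matrix, let A be a symmetric positive definite real p×p matrix, and let ρ > 0. Then Tr[ (S + ρ·A)⁻¹·S·(S + ρ·A)⁻¹ ] ≤ Tr[ (ρ·A)⁻¹ ]. -/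
open Matrix

private lemma trace_nonneg_of_posSemidef {p : ℕ} {M : Matrix (Fin p) (Fin p) ℝ}
    (hM : M.PosSemidef) : 0 ≤ M.trace := by
  exact hM.trace_nonneg

/-- Bound on the noise term of decomposition (6.6) in the proof of
Theorem 2: `Tr[(S + ρA)⁻¹ S (S + ρA)⁻¹] ≤ Tr[(ρA)⁻¹]`. -/
theorem stmt14 {p : ℕ} (hp : 1 ≤ p)
    (S A : Matrix (Fin p) (Fin p) ℝ) (hS : S.PosSemidef) (hA : A.PosDef)
    (ρ : ℝ) (hρ : 0 < ρ) :
    ((S + ρ • A)⁻¹ * S * (S + ρ • A)⁻¹).trace ≤ ((ρ • A)⁻¹).trace := by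
  set C : Matrix (Fin p) (Fin p) ℝ := ρ • A with hCdef
  set B : Matrix (Fin p) (Fin p) ℝ := S + C with hBdef
  have hC : C.PosDef := by
    refine Matrix.PosDef.of_dotProduct_mulVec_pos (by rw [hCdef, Matrix.IsHermitian, Matrix.conjTranspose_smul, star_trivial, hA.1.eq]) fun x hx => ?_
    have := hA.dotProduct_mulVec_pos hx
    simp only [hCdef, Matrix.smul_mulVec, dotProduct_smul, smul_eq_mul]
    positivity
  have hB : B.PosDef := Matrix.PosDef.posSemidef_add hS hC
  haveI := hB.isUnit.invertible
  haveI := hC.isUnit.invertible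
  have key : C⁻¹ - B⁻¹ * S * B⁻¹ = (B⁻¹ - C⁻¹) * C * (B⁻¹ - C⁻¹) + B⁻¹ := by
    have hSBC : S = B - C := by rw [hBdef]; abel
    rw [hSBC]
    simp only [Matrix.mul_sub, Matrix.sub_mul, Matrix.mul_assoc,
      Matrix.inv_mul_of_invertible, Matrix.mul_inv_of_invertible,
      Matrix.mul_one, Matrix.one_mul, Matrix.inv_mul_cancel_right_of_invertible,
      Matrix.mul_inv_cancel_left_of_invertible, Matrix.inv_mul_cancel_left_of_invertible]
    abel
  have hD : (B⁻¹ - C⁻¹).IsHermitian := hB.inv.1.sub hC.inv.1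
  have h1 : ((B⁻¹ - C⁻¹) * C * (B⁻¹ - C⁻¹)).PosSemidef := by
    have := hC.posSemidef.conjTranspose_mul_mul_same (B⁻¹ - C⁻¹)
    rwa [hD.eq] at this
  have h2 : ((B⁻¹ - C⁻¹) * C * (B⁻¹ - C⁻¹) + B⁻¹).PosSemidef :=
    h1.add hB.inv.posSemidef
  have h3 : 0 ≤ (C⁻¹ - B⁻¹ * S * B⁻¹).trace := by
    rw [key]; exact trace_nonneg_of_posSemidef h2
  rw [trace_sub] at h3
  linarith
end

section
/- Let H be a real separable Hilbert space, (Ω, 𝒜, ℙ) a probability space, and X : Ω → H a strongly measurable map with ∫ ‖X(ω)‖² dℙ(ω) < ∞. Let (ζ_r)_{r∈ℕ} be a Hilbert basis of H and (λ_r)_{r∈ℕ} a nonincreasing sequence of nonnegative reals such that ∫ ⟨X, ζ_r⟩·⟨X, ζ_s⟩ dℙ = λ_r if r = s and = 0 if r ≠ s, for all r, s ∈ ℕ. Then for every integer k ≥ 0 and every k-dimensional linear subspace L of H, with P_L the orthogonal projection of H onto L: Σ_{r ≥ k} λ_r ≤ ∫ ‖X(ω) − P_L(X(ω))‖² dℙ(ω).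 Moreover Σ_{r ≥ k} λ_r = ∫ ‖X(ω) − Σ_{s < k} ⟨X(ω), ζ_s⟩·ζ_s‖² dℙ(ω). -/
open MeasureTheory

lemma aux_norm_sub_sum {H : Type*} [NormedAddCommGroup H] [InnerProductSpace ℝ H]
    {ι : Type*} {v : ι → H} (hv : Orthonormal ℝ v) (s : Finset ι) (x : H) :
    ‖x - ∑ i ∈ s, (inner ℝ x (v i) : ℝ) • v i‖ ^ 2
      = ‖x‖ ^ 2 - ∑ i ∈ s, (inner ℝ x (v i) : ℝ) ^ 2 := by
  have hvv : ∀ i, (inner ℝ (v i) (v i) : ℝ) = 1 := fun i => by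
    rw [real_inner_self_eq_norm_sq, hv.1 i]; norm_num
  have hx : (inner ℝ x (∑ i ∈ s, (inner ℝ x (v i) : ℝ) • v i) : ℝ)
      = ∑ i ∈ s, (inner ℝ x (v i) : ℝ) ^ 2 := by
    rw [inner_sum]
    refine Finset.sum_congr rfl fun i _ => ?_
    rw [real_inner_smul_right]; ring
  have hn : ‖∑ i ∈ s, (inner ℝ x (v i) : ℝ) • v i‖ ^ 2
      = ∑ i ∈ s, (inner ℝ x (v i) : ℝ) ^ 2 := by
    rw [← real_inner_self_eq_norm_sq, sum_inner]
    refine Finset.sum_congr rfl fun i hi => ?_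
    rw [real_inner_smul_left, inner_sum, Finset.sum_eq_single i]
    · rw [real_inner_smul_right, hvv i]; ring
    · intro j _ hj
      rw [real_inner_smul_right, hv.2 (Ne.symm hj), mul_zero]
    · intro h; exact absurd hi h
  rw [norm_sub_sq_real, hx, hn]; ring

lemma aux_CS {Ω : Type*} [MeasurableSpace Ω] (P : Measure Ω) (f g : Ω → ℝ)
    (hf : AEStronglyMeasurable f P) (hg : AEStronglyMeasurable g P)
    (hf2 : Integrable (fun ω => f ω ^ 2) P) (hg2 : Integrable (fun ω => g ω ^ 2) P) :
    ∫ ω, f ω * g ω ∂P ≤ Real.sqrt (∫ ω, f ω ^ 2 ∂P) * Real.sqrt (∫ ω, g ω ^ 2 ∂P) := by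
  have habs : ∀ (h : Ω → ℝ), AEStronglyMeasurable h P →
      AEStronglyMeasurable (fun ω => |h ω|) P := fun h hh => by
    simpa [Real.norm_eq_abs] using hh.norm
  have hfg : Integrable (fun ω => |f ω| * |g ω|) P := by
    have hb : Integrable (fun ω => (f ω ^ 2 + g ω ^ 2) / 2) P := (hf2.add hg2).div_const 2
    refine Integrable.mono' hb ((habs f hf).mul (habs g hg)) ?_
    filter_upwards with ω
    rw [Real.norm_of_nonneg (by positivity)]
    nlinarith [sq_nonneg (|f ω| - |g ω|), sq_abs (f ω), sq_abs (g ω)]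
  have h1 : ∫ ω, f ω * g ω ∂P ≤ ∫ ω, |f ω| * |g ω| ∂P := by
    refine integral_mono ?_ hfg fun ω => ?_
    · refine hfg.mono' (hf.mul hg) ?_
      filter_upwards with ω
      simp [Real.norm_eq_abs, abs_mul, le_refl]
    · calc f ω * g ω ≤ |f ω * g ω| := le_abs_self _
        _ = |f ω| * |g ω| := abs_mul _ _
  have hmf : MemLp f 2 P := (memLp_two_iff_integrable_sq hf).mpr hf2
  have hmg : MemLp g 2 P := (memLp_two_iff_integrable_sq hg).mpr hg2
  have h2 : ∫ ω, |f ω| * |g ω| ∂P ≤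
      (∫ ω, |f ω| ^ (2:ℝ) ∂P) ^ ((1:ℝ)/2) * (∫ ω, |g ω| ^ (2:ℝ) ∂P) ^ ((1:ℝ)/2) := by
    have hpq : Real.HolderConjugate 2 2 := by constructor <;> norm_num
    have h2' : ENNReal.ofReal (2:ℝ) = 2 := by norm_num [ENNReal.ofReal_ofNat]
    have := integral_mul_le_Lp_mul_Lq_of_nonneg hpq
      (f := fun ω => |f ω|) (g := fun ω => |g ω|)
      (Filter.Eventually.of_forall fun ω => abs_nonneg _)
      (Filter.Eventually.of_forall fun ω => abs_nonneg _)
      (by rw [h2']; simpa [Real.norm_eq_abs] using hmf.norm)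
      (by rw [h2']; simpa [Real.norm_eq_abs] using hmg.norm)
    exact this
  have hconv : ∀ (h : Ω → ℝ),
      (∫ ω, |h ω| ^ (2:ℝ) ∂P) ^ ((1:ℝ)/2) = Real.sqrt (∫ ω, h ω ^ 2 ∂P) := by
    intro h
    rw [Real.sqrt_eq_rpow]
    congr 1
    refine integral_congr_ae (Filter.Eventually.of_forall fun ω => ?_)
    simp [Real.rpow_natCast, sq_abs]
  calc ∫ ω, f ω * g ω ∂P ≤ ∫ ω, |f ω| * |g ω| ∂P := h1
    _ ≤ _ := h2
    _ = _ := by rw [hconv f, hconv g]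

lemma aux_substoch (lam t : ℕ → ℝ) (hanti : Antitone lam) (hnonneg : ∀ r, 0 ≤ lam r)
    (hlam : Summable lam) (ht0 : ∀ r, 0 ≤ t r) (ht1 : ∀ r, t r ≤ 1)
    (htsum : Summable t) (k : ℕ) (htk : ∑' r, t r = (k : ℝ)) :
    ∑' r, lam r * t r ≤ ∑ r ∈ Finset.range k, lam r := by
  have hlt : Summable (fun r => lam r * t r) :=
    Summable.of_nonneg_of_le (fun r => mul_nonneg (hnonneg r) (ht0 r))
      (fun r => by nlinarith [hnonneg r, ht0 r, ht1 r]) hlam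
  have hsplit := Summable.sum_add_tsum_nat_add k hlt
  have hsplitt := Summable.sum_add_tsum_nat_add k htsum
  have htail : ∑' i, lam (i + k) * t (i + k) ≤ lam k * ∑' i, t (i + k) := by
    rw [← tsum_mul_left]
    refine Summable.tsum_le_tsum (fun i => ?_)
      ((hlt.comp_injective (add_left_injective k)).congr (fun i => rfl)) ?_
    · exact mul_le_mul_of_nonneg_right (hanti (Nat.le_add_left k i)) (ht0 _)
    · exact (htsum.comp_injective (add_left_injective k)).mul_left _
  have h2 : lam k * ∑' i, t (i + k) = ∑ r ∈ Finset.range k, lam k * (1 - t r) := by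
    have h3 : ∑' i, t (i + k) = (k : ℝ) - ∑ r ∈ Finset.range k, t r := by
      linarith [hsplitt, htk]
    rw [h3, mul_sub, Finset.mul_sum]
    have h4 : lam k * (k:ℝ) = ∑ r ∈ Finset.range k, lam k := by
      simp [mul_comm]
    rw [h4, ← Finset.sum_sub_distrib]
    exact Finset.sum_congr rfl fun r _ => by ring
  have h5 : ∑ r ∈ Finset.range k, lam k * (1 - t r) ≤
      ∑ r ∈ Finset.range k, lam r * (1 - t r) := by
    refine Finset.sum_le_sum fun r hr => ?_
    have := hanti (Nat.le_of_lt_succ (Nat.lt_succ_of_lt (Finset.mem_range.mp hr)))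
    exact mul_le_mul_of_nonneg_right (hanti (le_of_lt (Finset.mem_range.mp hr)))
      (by linarith [ht1 r])
  have h6 : ∑ r ∈ Finset.range k, lam r * t r + ∑ r ∈ Finset.range k, lam r * (1 - t r)
      = ∑ r ∈ Finset.range k, lam r := by
    rw [← Finset.sum_add_distrib]
    exact Finset.sum_congr rfl fun r _ => by ring
  linarith [hsplit, htail, h2, h5, h6]


/-- Relation (6.11) in the proof of Theorem 3 (best-basis property of the
Karhunen–Loève expansion): if `E(⟨X,ζ_r⟩⟨X,ζ_s⟩) = λ_r δ_{rs}` for a Hilbert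
basis `(ζ_r)` and nonincreasing nonnegative `(λ_r)`, then for every
`k`-dimensional subspace `L`, `Σ_{r≥k} λ_r ≤ E ‖X − P_L X‖²`, with equality
for the span of `ζ_0, …, ζ_{k−1}`. -/
theorem stmt16 {H : Type*} [NormedAddCommGroup H] [InnerProductSpace ℝ H]
    [CompleteSpace H] [TopologicalSpace.SeparableSpace H]
    {Ω : Type*} [MeasurableSpace Ω] (P : Measure Ω) [IsProbabilityMeasure P]
    (X : Ω → H) (hmeas : StronglyMeasurable X)
    (hint : Integrable (fun ω => ‖X ω‖ ^ 2) P)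
    (ζ : HilbertBasis ℕ ℝ H)
    (lam : ℕ → ℝ) (hanti : Antitone lam) (hnonneg : ∀ r, 0 ≤ lam r)
    (hcov : ∀ r s : ℕ,
      ∫ ω, (inner ℝ (X ω) (ζ r) : ℝ) * (inner ℝ (X ω) (ζ s) : ℝ) ∂P =
        if r = s then lam r else 0) :
    (∀ (k : ℕ) (L : Submodule ℝ H) [FiniteDimensional ℝ L],
      Module.finrank ℝ L = k →
        (∑' i : ℕ, lam (k + i)) ≤
          ∫ ω, ‖X ω - (L.orthogonalProjection (X ω) : H)‖ ^ 2 ∂P) ∧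
    (∀ k : ℕ,
      (∑' i : ℕ, lam (k + i)) =
        ∫ ω, ‖X ω - ∑ s ∈ Finset.range k, (inner ℝ (X ω) (ζ s) : ℝ) • (ζ s : H)‖ ^ 2 ∂P) := by
  classical
  -- measurability
  have hmeasi : ∀ e : H, AEStronglyMeasurable (fun ω => (inner ℝ (X ω) e : ℝ)) P := by
    intro e
    exact (hmeas.inner stronglyMeasurable_const).aestronglyMeasurable
  -- integrability of products
  have hinte : ∀ e f : H,
      Integrable (fun ω => (inner ℝ (X ω) e : ℝ) * (inner ℝ (X ω) f : ℝ)) P := by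
    intro e f
    refine Integrable.mono' (hint.const_mul (‖e‖ * ‖f‖)) ((hmeasi e).mul (hmeasi f)) ?_
    filter_upwards with ω
    rw [Real.norm_eq_abs, abs_mul]
    calc |(inner ℝ (X ω) e : ℝ)| * |(inner ℝ (X ω) f : ℝ)|
        ≤ (‖X ω‖ * ‖e‖) * (‖X ω‖ * ‖f‖) := by
          exact mul_le_mul (abs_real_inner_le_norm _ _) (abs_real_inner_le_norm _ _)
            (abs_nonneg _) (by positivity)
      _ = ‖e‖ * ‖f‖ * ‖X ω‖ ^ 2 := by ring
  have hintsq : ∀ e : H, Integrable (fun ω => (inner ℝ (X ω) e : ℝ) ^ 2) P := by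
    intro e
    have := hinte e e
    refine this.congr (Filter.Eventually.of_forall fun ω => ?_)
    ring
  set B : H → ℝ := fun e => ∫ ω, (inner ℝ (X ω) e : ℝ) ^ 2 ∂P with hBdef
  have hB0 : ∀ e, 0 ≤ B e := fun e =>
    integral_nonneg fun ω => sq_nonneg _
  have hBzeta : ∀ r, B (ζ r) = lam r := by
    intro r
    have := hcov r r
    rw [if_pos rfl] at this
    rw [hBdef]
    simp only
    rw [← this]
    exact integral_congr_ae (Filter.Eventually.of_forall fun ω => by ring)
  -- Parseval pointwise
  have hpars : ∀ x : H, HasSum (fun r => (inner ℝ x (ζ r) : ℝ) ^ 2) (‖x‖ ^ 2) := by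
    intro x
    have h := ζ.hasSum_inner_mul_inner x x
    rw [real_inner_self_eq_norm_sq] at h
    refine h.congr_fun fun r => ?_
    rw [real_inner_comm (ζ r) x]; ring
  -- summability of lam
  have hbessel_int : ∀ u : Finset ℕ,
      ∑ r ∈ u, lam r ≤ ∫ ω, ‖X ω‖ ^ 2 ∂P := by
    intro u
    have h1 : ∑ r ∈ u, lam r = ∫ ω, ∑ r ∈ u, (inner ℝ (X ω) (ζ r) : ℝ) ^ 2 ∂P := by
      rw [integral_finset_sum u (fun r _ => hintsq (ζ r))]
      exact (Finset.sum_congr rfl fun r _ => (hBzeta r).symm)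
    rw [h1]
    refine integral_mono (integrable_finset_sum u (fun r _ => hintsq (ζ r))) hint fun ω => ?_
    exact sum_le_hasSum u (fun i _ => sq_nonneg _) (hpars (X ω))
  have hlamsum : Summable lam :=
    summable_of_sum_le hnonneg hbessel_int
  -- total variance
  have htot : ∫ ω, ‖X ω‖ ^ 2 ∂P = ∑' r, lam r := by
    have hlin : ∀ r : ℕ, ∫⁻ ω, ‖(inner ℝ (X ω) (ζ r) : ℝ) ^ 2‖ₑ ∂P
        = ENNReal.ofReal (lam r) := by
      intro r
      rw [← hBzeta r]
      have := ofReal_integral_eq_lintegral_ofReal (hintsq (ζ r))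
        (Filter.Eventually.of_forall fun ω => sq_nonneg _)
      rw [hBdef]
      simp only
      rw [this]
      exact lintegral_congr fun ω => Real.enorm_eq_ofReal (sq_nonneg _)
    have hswap := integral_tsum (f := fun r ω => (inner ℝ (X ω) (ζ r) : ℝ) ^ 2)
      (fun r => ((hintsq (ζ r)).aestronglyMeasurable))
      (by
        rw [funext hlin] at *
        rw [show (∑' r, ENNReal.ofReal (lam r)) = ENNReal.ofReal (∑' r, lam r) from
          (ENNReal.ofReal_tsum_of_nonneg hnonneg hlamsum).symm]
        · exact ENNReal.ofReal_ne_top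
        )
    have hpt : ∫ ω, (∑' r, (inner ℝ (X ω) (ζ r) : ℝ) ^ 2) ∂P = ∫ ω, ‖X ω‖ ^ 2 ∂P :=
      integral_congr_ae (Filter.Eventually.of_forall fun ω => (hpars (X ω)).tsum_eq)
    rw [← hpt, hswap]
    exact tsum_congr fun r => hBzeta r
  -- part 2
  have part2 : ∀ k : ℕ,
      (∑' i : ℕ, lam (k + i)) =
        ∫ ω, ‖X ω - ∑ s ∈ Finset.range k, (inner ℝ (X ω) (ζ s) : ℝ) • (ζ s : H)‖ ^ 2 ∂P := by
    intro k
    have hpt : ∀ ω, ‖X ω - ∑ s ∈ Finset.range k, (inner ℝ (X ω) (ζ s) : ℝ) • (ζ s : H)‖ ^ 2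
        = ‖X ω‖ ^ 2 - ∑ s ∈ Finset.range k, (inner ℝ (X ω) (ζ s) : ℝ) ^ 2 := fun ω =>
      aux_norm_sub_sum ζ.orthonormal (Finset.range k) (X ω)
    have hrhs : ∫ ω, ‖X ω - ∑ s ∈ Finset.range k, (inner ℝ (X ω) (ζ s) : ℝ) • (ζ s : H)‖ ^ 2 ∂P
        = (∑' r, lam r) - ∑ s ∈ Finset.range k, lam s := by
      rw [integral_congr_ae (Filter.Eventually.of_forall fun ω => hpt ω),
        integral_sub hint (integrable_finset_sum _ (fun s _ => hintsq (ζ s))),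
        htot, integral_finset_sum _ (fun s _ => hintsq (ζ s))]
      congr 1
      exact Finset.sum_congr rfl fun s _ => hBzeta s
    rw [hrhs]
    have hsplit := Summable.sum_add_tsum_nat_add k hlamsum
    have hcomm : (∑' i, lam (k + i)) = ∑' i, lam (i + k) :=
      tsum_congr fun i => by rw [add_comm]
    linarith [hsplit, hcomm]
  -- key bound
  have hkey : ∀ e : H, B e ≤ ∑' r, lam r * (inner ℝ e (ζ r) : ℝ) ^ 2 := by
    intro e
    set a : ℕ → ℝ := fun r => (inner ℝ e (ζ r) : ℝ) with hadef
    set C : ℝ := ∫ ω, ‖X ω‖ ^ 2 ∂P with hCdef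
    have hC0 : 0 ≤ C := integral_nonneg fun ω => sq_nonneg _
    have hasum : Summable (fun r => a r ^ 2) := (hpars e).summable
    have halamsq : Summable (fun r => lam r * a r ^ 2) :=
      Summable.of_nonneg_of_le (fun r => mul_nonneg (hnonneg r) (sq_nonneg _))
        (fun r => mul_le_mul_of_nonneg_right (hanti (Nat.zero_le r)) (sq_nonneg _))
        (hasum.mul_left (lam 0))
    set S : ℝ := ∑' r, lam r * a r ^ 2 with hSdef
    have hS0 : 0 ≤ S := tsum_nonneg fun r => mul_nonneg (hnonneg r) (sq_nonneg _)
    -- partial sums and remainders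
    set p : ℕ → H := fun n => ∑ r ∈ Finset.range n, a r • (ζ r : H) with hpdef
    set q : ℕ → H := fun n => e - p n with hqdef
    have hpq : ∀ n, p n + q n = e := fun n => by rw [hqdef]; simp
    -- B of partial sums
    have hBp : ∀ n, B (p n) = ∑ r ∈ Finset.range n, lam r * a r ^ 2 := by
      intro n
      have hip : ∀ ω, (inner ℝ (X ω) (p n) : ℝ)
          = ∑ r ∈ Finset.range n, a r * (inner ℝ (X ω) (ζ r) : ℝ) := by
        intro ω
        rw [hpdef]
        simp only
        rw [inner_sum]
        exact Finset.sum_congr rfl fun r _ => real_inner_smul_right _ _ _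
      have hsq : ∀ ω, (inner ℝ (X ω) (p n) : ℝ) ^ 2
          = ∑ r ∈ Finset.range n, ∑ s ∈ Finset.range n,
              (a r * a s) * ((inner ℝ (X ω) (ζ r) : ℝ) * (inner ℝ (X ω) (ζ s) : ℝ)) := by
        intro ω
        rw [hip ω, sq, Finset.sum_mul_sum]
        exact Finset.sum_congr rfl fun r _ => Finset.sum_congr rfl fun s _ => by ring
      rw [hBdef]
      simp only
      rw [integral_congr_ae (Filter.Eventually.of_forall hsq)]
      rw [integral_finset_sum _ (fun r _ =>
        integrable_finset_sum _ (fun s _ => ((hinte (ζ r) (ζ s)).const_mul _)))]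
      refine Finset.sum_congr rfl fun r hr => ?_
      rw [integral_finset_sum _ (fun s _ => ((hinte (ζ r) (ζ s)).const_mul _))]
      have hterm : ∀ s ∈ Finset.range n,
          ∫ ω, (a r * a s) * ((inner ℝ (X ω) (ζ r) : ℝ) * (inner ℝ (X ω) (ζ s) : ℝ)) ∂P
            = if r = s then lam r * a r ^ 2 else 0 := by
        intro s _
        rw [integral_const_mul, hcov r s]
        by_cases h : r = s
        · subst h; simp [if_pos rfl]; ring
        · simp [h]
      rw [Finset.sum_congr rfl hterm, Finset.sum_ite_eq (Finset.range n) r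
        (fun _ => lam r * a r ^ 2), if_pos hr]
    -- B of remainders
    have hBq : ∀ n, B (q n) ≤ C * ‖q n‖ ^ 2 := by
      intro n
      have hpt : ∀ ω, (inner ℝ (X ω) (q n) : ℝ) ^ 2 ≤ ‖X ω‖ ^ 2 * ‖q n‖ ^ 2 := by
        intro ω
        have h1 := abs_real_inner_le_norm (X ω) (q n)
        have h2 : (inner ℝ (X ω) (q n) : ℝ) ^ 2 = |(inner ℝ (X ω) (q n) : ℝ)| ^ 2 :=
          (sq_abs _).symm
        rw [h2]
        calc |(inner ℝ (X ω) (q n) : ℝ)| ^ 2 ≤ (‖X ω‖ * ‖q n‖) ^ 2 := by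
              exact pow_le_pow_left₀ (abs_nonneg _) h1 2
          _ = ‖X ω‖ ^ 2 * ‖q n‖ ^ 2 := by ring
      calc B (q n) ≤ ∫ ω, ‖X ω‖ ^ 2 * ‖q n‖ ^ 2 ∂P :=
            integral_mono (hintsq (q n)) (hint.mul_const _) hpt
        _ = C * ‖q n‖ ^ 2 := by rw [integral_mul_const, hCdef]
    -- triangle inequality in L2
    have htri : ∀ n, B e ≤ (Real.sqrt (B (p n)) + Real.sqrt (B (q n))) ^ 2 := by
      intro n
      have hsum : ∀ ω, (inner ℝ (X ω) e : ℝ)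
          = (inner ℝ (X ω) (p n) : ℝ) + (inner ℝ (X ω) (q n) : ℝ) := by
        intro ω
        rw [← inner_add_right, hpq n]
      have hexp : B e = B (p n) + 2 * (∫ ω, (inner ℝ (X ω) (p n) : ℝ)
          * (inner ℝ (X ω) (q n) : ℝ) ∂P) + B (q n) := by
        rw [hBdef]
        simp only
        have : ∀ ω, (inner ℝ (X ω) e : ℝ) ^ 2
            = (inner ℝ (X ω) (p n) : ℝ) ^ 2
              + 2 * ((inner ℝ (X ω) (p n) : ℝ) * (inner ℝ (X ω) (q n) : ℝ))
              + (inner ℝ (X ω) (q n) : ℝ) ^ 2 := fun ω => by rw [hsum ω]; ring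
        have i2 : Integrable (fun ω => 2 * ((inner ℝ (X ω) (p n) : ℝ)
            * (inner ℝ (X ω) (q n) : ℝ))) P := (hinte (p n) (q n)).const_mul 2
        have e1 : ∫ ω, (((inner ℝ (X ω) (p n) : ℝ) ^ 2
              + 2 * ((inner ℝ (X ω) (p n) : ℝ) * (inner ℝ (X ω) (q n) : ℝ)))
              + (inner ℝ (X ω) (q n) : ℝ) ^ 2) ∂P
            = (∫ ω, ((inner ℝ (X ω) (p n) : ℝ) ^ 2
              + 2 * ((inner ℝ (X ω) (p n) : ℝ) * (inner ℝ (X ω) (q n) : ℝ))) ∂P)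
              + ∫ ω, (inner ℝ (X ω) (q n) : ℝ) ^ 2 ∂P :=
          integral_add ((hintsq (p n)).add i2) (hintsq (q n))
        have e2 : ∫ ω, ((inner ℝ (X ω) (p n) : ℝ) ^ 2
              + 2 * ((inner ℝ (X ω) (p n) : ℝ) * (inner ℝ (X ω) (q n) : ℝ))) ∂P
            = (∫ ω, (inner ℝ (X ω) (p n) : ℝ) ^ 2 ∂P)
              + ∫ ω, 2 * ((inner ℝ (X ω) (p n) : ℝ) * (inner ℝ (X ω) (q n) : ℝ)) ∂P :=
          integral_add (hintsq (p n)) i2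
        have e3 : ∫ ω, 2 * ((inner ℝ (X ω) (p n) : ℝ) * (inner ℝ (X ω) (q n) : ℝ)) ∂P
            = 2 * ∫ ω, ((inner ℝ (X ω) (p n) : ℝ) * (inner ℝ (X ω) (q n) : ℝ)) ∂P :=
          integral_const_mul 2 _
        rw [integral_congr_ae (Filter.Eventually.of_forall this), e1, e2, e3]
      have hcs := aux_CS P _ _ (hmeasi (p n)) (hmeasi (q n)) (hintsq (p n)) (hintsq (q n))
      have h1 : (Real.sqrt (B (p n)) + Real.sqrt (B (q n))) ^ 2
          = B (p n) + 2 * (Real.sqrt (B (p n)) * Real.sqrt (B (q n))) + B (q n) := by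
        have e1 : Real.sqrt (B (p n)) ^ 2 = B (p n) := Real.sq_sqrt (hB0 _)
        have e2 : Real.sqrt (B (q n)) ^ 2 = B (q n) := Real.sq_sqrt (hB0 _)
        nlinarith [e1, e2]
      rw [hexp, h1]
      have : (∫ ω, (inner ℝ (X ω) (p n) : ℝ) * (inner ℝ (X ω) (q n) : ℝ) ∂P)
          ≤ Real.sqrt (B (p n)) * Real.sqrt (B (q n)) := hcs
      linarith
    -- combined bound
    have hbound : ∀ n, B e ≤ (Real.sqrt (∑ r ∈ Finset.range n, lam r * a r ^ 2)
        + Real.sqrt (C * ‖q n‖ ^ 2)) ^ 2 := by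
      intro n
      refine le_trans (htri n) (pow_le_pow_left₀ ?_ (add_le_add ?_ ?_) 2)
      · positivity
      · rw [hBp n]
      · exact Real.sqrt_le_sqrt (hBq n)
    -- limits
    have hps : Filter.Tendsto (fun n => p n) Filter.atTop (nhds e) := by
      have h := (ζ.hasSum_repr e).tendsto_sum_nat
      have heq : ∀ i : ℕ, (ζ.repr e i : ℝ) • (ζ i : H) = a i • (ζ i : H) := by
        intro i
        rw [ζ.repr_apply_apply, real_inner_comm, hadef]
      refine h.congr fun n => ?_
      rw [hpdef]
      exact Finset.sum_congr rfl fun i _ => heq i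
    have hq0 : Filter.Tendsto (fun n => ‖q n‖) Filter.atTop (nhds 0) := by
      have h := (tendsto_const_nhds (x := e)).sub hps
      rw [sub_self] at h
      have := h.norm
      rwa [norm_zero] at this
    have hlim : Filter.Tendsto (fun n => (Real.sqrt (∑ r ∈ Finset.range n, lam r * a r ^ 2)
        + Real.sqrt (C * ‖q n‖ ^ 2)) ^ 2) Filter.atTop (nhds S) := by
      have h1 : Filter.Tendsto (fun n => ∑ r ∈ Finset.range n, lam r * a r ^ 2)
          Filter.atTop (nhds S) := halamsq.hasSum.tendsto_sum_nat
      have hs1 : Filter.Tendsto (fun n => Real.sqrt (∑ r ∈ Finset.range n, lam r * a r ^ 2))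
          Filter.atTop (nhds (Real.sqrt S)) :=
        (Real.continuous_sqrt.tendsto S).comp h1
      have h2 : Filter.Tendsto (fun n => C * ‖q n‖ ^ 2) Filter.atTop (nhds 0) := by
        have := (hq0.pow 2).const_mul C
        simpa using this
      have hs2 : Filter.Tendsto (fun n => Real.sqrt (C * ‖q n‖ ^ 2))
          Filter.atTop (nhds 0) := by
        have h3 := (Real.continuous_sqrt.tendsto 0).comp h2
        rw [Real.sqrt_zero] at h3
        exact h3
      have h4 := ((hs1.add hs2).pow 2)
      rw [add_zero, Real.sq_sqrt hS0] at h4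
      exact h4
    exact ge_of_tendsto' hlim hbound
  refine ⟨?_, part2⟩
  intro k L _ hrank
  subst hrank
  set b := stdOrthonormalBasis ℝ L with hbdef
  set E : Fin (Module.finrank ℝ L) → H := fun j => ((b j : L) : H) with hEdef
  have hon : Orthonormal ℝ E := b.orthonormal.comp_linearIsometry L.subtypeₗᵢ
  have hproj : ∀ x : H, ((L.orthogonalProjection x : L) : H)
      = ∑ j, (inner ℝ x (E j) : ℝ) • E j := by
    intro x
    rw [b.orthogonalProjectionOnto_apply_eq_sum x]
    push_cast
    refine Finset.sum_congr rfl fun j _ => ?_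
    rw [real_inner_comm]
  have hpt : ∀ ω, ‖X ω - ((L.orthogonalProjection (X ω) : L) : H)‖ ^ 2
      = ‖X ω‖ ^ 2 - ∑ j, (inner ℝ (X ω) (E j) : ℝ) ^ 2 := by
    intro ω
    rw [hproj (X ω)]
    exact aux_norm_sub_sum hon Finset.univ (X ω)
  have hintegral : ∫ ω, ‖X ω - ((L.orthogonalProjection (X ω) : L) : H)‖ ^ 2 ∂P
      = (∑' r, lam r) - ∑ j, B (E j) := by
    rw [integral_congr_ae (Filter.Eventually.of_forall hpt),
      integral_sub hint (integrable_finset_sum _ (fun j _ => hintsq (E j))), htot,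
      integral_finset_sum _ (fun j _ => hintsq (E j))]
  -- summability facts
  have hsumj : ∀ j, Summable (fun r => (inner ℝ (E j) (ζ r) : ℝ) ^ 2) :=
    fun j => (hpars (E j)).summable
  have hsumlj : ∀ j, Summable (fun r => lam r * (inner ℝ (E j) (ζ r) : ℝ) ^ 2) := by
    intro j
    exact Summable.of_nonneg_of_le (fun r => mul_nonneg (hnonneg r) (sq_nonneg _))
      (fun r => mul_le_mul_of_nonneg_right (hanti (Nat.zero_le r)) (sq_nonneg _))
      ((hsumj j).mul_left (lam 0))
  have hnormE : ∀ j, ‖E j‖ = 1 := fun j => hon.1 j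
  have htsumj : ∀ j, ∑' r, (inner ℝ (E j) (ζ r) : ℝ) ^ 2 = 1 := by
    intro j
    rw [(hpars (E j)).tsum_eq, hnormE j]
    norm_num
  set t : ℕ → ℝ := fun r => ∑ j, (inner ℝ (E j) (ζ r) : ℝ) ^ 2 with htdef
  have ht0 : ∀ r, 0 ≤ t r := fun r => Finset.sum_nonneg fun j _ => sq_nonneg _
  have ht1 : ∀ r, t r ≤ 1 := by
    intro r
    have h := hon.sum_inner_products_le (𝕜 := ℝ) (s := Finset.univ) (ζ r)
    have hz : ‖(ζ r : H)‖ = 1 := ζ.orthonormal.1 r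
    rw [hz] at h
    simp only [Real.norm_eq_abs, sq_abs, one_pow] at h
    exact h
  have htsum : Summable t := summable_sum (fun j _ => hsumj j)
  have htswap : ∑' r, t r = ∑ j, ∑' r, (inner ℝ (E j) (ζ r) : ℝ) ^ 2 :=
    Summable.tsum_finsetSum (fun j _ => hsumj j)
  have htk : ∑' r, t r = ((Module.finrank ℝ L : ℕ) : ℝ) := by
    rw [htswap]
    simp [htsumj]
  have hswap2 : ∑ j, ∑' r, lam r * (inner ℝ (E j) (ζ r) : ℝ) ^ 2
      = ∑' r, lam r * t r := by
    rw [← Summable.tsum_finsetSum (fun j _ => hsumlj j)]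
    refine tsum_congr fun r => ?_
    rw [htdef]
    simp only
    rw [Finset.mul_sum]
  have hBsum : ∑ j, B (E j) ≤ ∑ r ∈ Finset.range (Module.finrank ℝ L), lam r := by
    calc ∑ j, B (E j) ≤ ∑ j, ∑' r, lam r * (inner ℝ (E j) (ζ r) : ℝ) ^ 2 :=
          Finset.sum_le_sum fun j _ => hkey (E j)
      _ = ∑' r, lam r * t r := hswap2
      _ ≤ ∑ r ∈ Finset.range (Module.finrank ℝ L), lam r :=
          aux_substoch lam t hanti hnonneg hlamsum ht0 ht1 htsum _ htk
  have hsplit := Summable.sum_add_tsum_nat_add (Module.finrank ℝ L) hlamsum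
  have hcomm : (∑' i, lam (Module.finrank ℝ L + i)) = ∑' i, lam (i + Module.finrank ℝ L) :=
    tsum_congr fun i => by rw [add_comm]
  rw [hintegral]
  linarith [hsplit, hcomm, hBsum]
end
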